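/- arXiv:1909.04651 — 4 statements merged into one kernel-verified Lean document; each statement's English description precedes it below -/
import Mathlib

section
/- Let β > 0, C_K > 0, p₀ > 1, F ≥ 0 and ν ≥ 0, and set t* := β(p₀ − 1)/(2p₀). There exist constants C₁, C₂ ≥ 0, depending only on p₀, β, C_K and F, such that the following holds for any T ≥ t*. Let u be a smooth time-dependent divergence-free vector field on [0,T]×𝕋² satisfying ∫_{𝕋²} exp(β |∇u(x,t)|) dx ≤ C_K for every t ∈ [0,T]. Let f be measurable with |f(x,t)| ≤ F on [0,T]×𝕋², and let θ : [0,T]×𝕋² → [0,∞) be smooth, nonnegative, and satisfy the pointwise differential inequality ∂_tθ + u·∇θ − νΔθ ≤ |∇u| θ + f on [0,T]×𝕋². Then sup_{t∈[0,t*]} ‖θ(·,t)‖_{L²(𝕋²)} ≤ C₁ ‖θ(·,0)‖_{L^{2p₀}(𝕋²)}^{p₀} + C₂. -/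
open MeasureTheory Filter Topology ENNReal

noncomputable section

/-- The plane `ℝ²` with the Euclidean norm. -/
abbrev E2 : Type := EuclideanSpace ℝ (Fin 2)

/-- A fundamental domain for the torus `𝕋² = ℝ²/ℤ²`. -/
def T2 : Set E2 := {x | ∀ i, x i ∈ Set.Ico (0:ℝ) 1}

/-- Lebesgue measure on the torus (Lebesgue measure on a fundamental domain). -/
def μT : Measure E2 := volume.restrict T2

/-- The vector of ℝ² with integer coordinates `k`. -/
def ivec (k : Fin 2 → ℤ) : E2 := WithLp.toLp 2 (fun i => (k i : ℝ))

/-- ℤ²-periodicity for scalar functions (i.e. functions on the torus). -/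
def Periodic2 (f : E2 → ℝ) : Prop := ∀ (x : E2) (k : Fin 2 → ℤ), f (x + ivec k) = f x

/-- ℤ²-periodicity for vector fields. -/
def PeriodicV (u : E2 → E2) : Prop := ∀ (x : E2) (k : Fin 2 → ℤ), u (x + ivec k) = u x

/-- Partial derivative `∂ᵢ f`. -/
def pd (f : E2 → ℝ) (i : Fin 2) (x : E2) : ℝ := fderiv ℝ f x (EuclideanSpace.single i 1)

/-- Laplacian. -/
def lap (f : E2 → ℝ) (x : E2) : ℝ := ∑ i, pd (fun y => pd f i y) i x

/-- Advective derivative `u·∇f`. -/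
def advect (u : E2 → E2) (f : E2 → ℝ) (x : E2) : ℝ := ∑ i, u x i * pd f i x

/-- Divergence of a vector field. -/
def divergence (u : E2 → E2) (x : E2) : ℝ := ∑ i, pd (fun y => u y i) i x

/-- Two-dimensional curl, `∂₁u₂ - ∂₂u₁`. -/
def curl2 (u : E2 → E2) (x : E2) : ℝ :=
  pd (fun y => u y 1) 0 x - pd (fun y => u y 0) 1 x

/-- Frobenius norm of the velocity gradient matrix `|∇u|`. -/
def gradVNorm (u : E2 → E2) (x : E2) : ℝ :=
  Real.sqrt (∑ i, ∑ j, (pd (fun y => u y i) j x) ^ 2)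

/-- Euclidean norm of the gradient of a scalar, `|∇f|`. -/
def gradSNorm (f : E2 → ℝ) (x : E2) : ℝ :=
  Real.sqrt (∑ i, (pd f i x) ^ 2)

/-- A smooth bounded forcing on `[0,T] × 𝕋²`. -/
structure IsSmoothForcing (T : ℝ) (g : ℝ → E2 → ℝ) : Prop where
  smooth : ContDiff ℝ (⊤ : ℕ∞) (fun q : ℝ × E2 => g q.1 q.2)
  periodic : ∀ t, Periodic2 (g t)
  bounded : ∃ M : ℝ, ∀ t ∈ Set.Icc 0 T, ∀ x, |g t x| ≤ M

/-- A classical solution `(u, ω)` of the 2D vorticity equation with viscosity `ν` on `[0,T]`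
with forcing `g`: smooth on `(0,T] × 𝕋²`, continuous at `t = 0` in `L²`, divergence free,
`curl u = ω`, and `∂ₜω + u·∇ω = νΔω + g` pointwise on `(0,T] × 𝕋²`. -/
structure IsClassicalVorticitySol (ν T : ℝ) (g : ℝ → E2 → ℝ)
    (u : ℝ → E2 → E2) (ω : ℝ → E2 → ℝ) : Prop where
  smooth_u : ContDiffOn ℝ (⊤ : ℕ∞) (fun q : ℝ × E2 => u q.1 q.2)
      (Set.Ioc 0 T ×ˢ (Set.univ : Set E2))
  smooth_ω : ContDiffOn ℝ (⊤ : ℕ∞) (fun q : ℝ × E2 => ω q.1 q.2)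
      (Set.Ioc 0 T ×ˢ (Set.univ : Set E2))
  periodic_u : ∀ t, PeriodicV (u t)
  periodic_ω : ∀ t, Periodic2 (ω t)
  meas_ω0 : Measurable (ω 0)
  divFree : ∀ t ∈ Set.Ioc 0 T, ∀ x, divergence (u t) x = 0
  curl_eq : ∀ t ∈ Set.Ioc 0 T, ∀ x, curl2 (u t) x = ω t x
  init : Tendsto (fun t => eLpNorm (fun x => ω t x - ω 0 x) 2 μT) (𝓝[>] 0) (𝓝 0)
  pde : ∀ t ∈ Set.Ioc 0 T, ∀ x : E2,
    HasDerivWithinAt (fun s => ω s x)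
      (ν * lap (ω t) x + g t x - advect (u t) (ω t) x) (Set.Ioc 0 T) t

/-- A Yudovich weak solution `(u, ω)` of the 2D Euler equations on `[0,T]` with forcing `g`
and initial vorticity `ω₀ ∈ L^∞(𝕋²)`. -/
structure IsYudovichSol (T : ℝ) (g : ℝ → E2 → ℝ) (ω₀ : E2 → ℝ)
    (u : ℝ → E2 → E2) (ω : ℝ → E2 → ℝ) : Prop where
  meas_ω : Measurable (fun q : ℝ × E2 => ω q.1 q.2)
  bdd_ω : ∃ M : ℝ, ∀ t ∈ Set.Icc 0 T, ∀ x, |ω t x| ≤ M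
  periodic_ω : ∀ t, Periodic2 (ω t)
  meas_u : ∀ t, Measurable (u t)
  memL2_u : ∀ t ∈ Set.Icc 0 T, eLpNorm (u t) 2 μT ≠ ⊤
  zeroMean_u : ∀ t ∈ Set.Icc 0 T, ∫ x, u t x ∂μT = 0
  periodic_u : ∀ t, PeriodicV (u t)
  divFree_weak : ∀ t ∈ Set.Icc 0 T, ∀ φ : E2 → ℝ, ContDiff ℝ (⊤ : ℕ∞) φ → Periodic2 φ →
    ∫ x, (∑ i, u t x i * pd φ i x) ∂μT = 0
  curl_weak : ∀ t ∈ Set.Icc 0 T, ∀ φ : E2 → ℝ, ContDiff ℝ (⊤ : ℕ∞) φ → Periodic2 φ →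
    ∫ x, ω t x * φ x ∂μT = ∫ x, (u t x 0 * pd φ 1 x - u t x 1 * pd φ 0 x) ∂μT
  weakForm : ∀ φ : E2 → ℝ, ContDiff ℝ (⊤ : ℕ∞) φ → Periodic2 φ → ∀ t ∈ Set.Icc 0 T,
    (∫ x, ω t x * φ x ∂μT) - (∫ x, ω₀ x * φ x ∂μT)
      = ∫ s in (0:ℝ)..t, (∫ x, (ω s x * advect (u s) φ x + g s x * φ x) ∂μT)

end

noncomputable section

section Chunk1
open Set

lemma measurableSet_T2 : MeasurableSet T2 := by
  have : T2 = ⋂ i, (fun x : E2 => x i) ⁻¹' Set.Ico (0:ℝ) 1 := by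
    ext x; simp [T2]
  rw [this]
  exact MeasurableSet.iInter fun i =>
    ((by fun_prop : Continuous fun x : E2 => x i).measurable) measurableSet_Ico

lemma volume_T2 : (volume : Measure E2) T2 = 1 := by
  have h : T2 = (MeasurableEquiv.toLp 2 (Fin 2 → ℝ)).symm ⁻¹'
      (Set.univ.pi fun _ : Fin 2 => Set.Ico (0:ℝ) 1) := by
    ext x; simp [T2, Set.mem_pi]
  rw [h, (EuclideanSpace.volume_preserving_symm_measurableEquiv_toLp (Fin 2)).measure_preimage
    ((MeasurableSet.univ_pi fun _ => measurableSet_Ico).nullMeasurableSet)]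
  rw [volume_pi_pi]
  simp

instance : IsProbabilityMeasure μT := by
  constructor
  rw [μT, Measure.restrict_apply_univ, volume_T2]

def B2 : Set E2 := {x | ∀ i, x i ∈ Set.Icc (0:ℝ) 1}

lemma T2_subset_B2 : T2 ⊆ B2 := fun x hx i => ⟨(hx i).1, le_of_lt (hx i).2⟩

lemma isCompact_B2 : IsCompact B2 := by
  have hclosed : IsClosed B2 := by
    have : B2 = ⋂ i, (fun x : E2 => x i) ⁻¹' Set.Icc (0:ℝ) 1 := by
      ext x; simp [B2]
    rw [this]
    exact isClosed_iInter fun i => isClosed_Icc.preimage (by fun_prop : Continuous fun x : E2 => x i)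
  have hbdd : Bornology.IsBounded B2 := by
    apply Bornology.IsBounded.subset (Metric.isBounded_closedBall (x := (0:E2)) (r := 2))
    intro x hx
    simp only [Metric.mem_closedBall, dist_zero_right]
    have : ‖x‖ ≤ Real.sqrt 2 := by
      rw [EuclideanSpace.norm_eq]
      apply Real.sqrt_le_sqrt
      have : ∀ i, ‖x i‖ ^ 2 ≤ 1 := by
        intro i
        have h1 := (hx i).1; have h2 := (hx i).2
        rw [Real.norm_eq_abs, abs_of_nonneg h1]
        nlinarith
      calc (∑ i, ‖x i‖ ^ 2) ≤ ∑ _i : Fin 2, (1:ℝ) := Finset.sum_le_sum fun i _ => this i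
        _ = 2 := by simp
    refine this.trans ?_
    nlinarith [Real.sq_sqrt (by norm_num : (2:ℝ) ≥ 0), Real.sqrt_nonneg 2]
  exact Metric.isCompact_of_isClosed_isBounded hclosed hbdd

lemma integrable_muT_of_continuous {f : E2 → ℝ} (hf : Continuous f) :
    Integrable f μT := by
  have : IntegrableOn f B2 volume := hf.continuousOn.integrableOn_compact isCompact_B2
  exact this.mono_set T2_subset_B2

end Chunk1

section Chunk2
open Set

lemma contDiff_pd {g : E2 → ℝ} (hg : ContDiff ℝ (⊤:ℕ∞) g) (i : Fin 2) :
    ContDiff ℝ (⊤:ℕ∞) (pd g i) :=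
  (hg.fderiv_right (by simp)).clm_apply contDiff_const

lemma continuous_lap {g : E2 → ℝ} (hg : ContDiff ℝ (⊤:ℕ∞) g) : Continuous (lap g) := by
  have : Continuous fun x => ∑ i, pd (fun y => pd g i y) i x :=
    continuous_finset_sum _ fun i _ => (contDiff_pd (contDiff_pd hg i) i).continuous
  exact this

variable {Θ : ℝ × E2 → ℝ}

lemma contDiff_slice (hΘ : ContDiff ℝ (⊤:ℕ∞) Θ) (t : ℝ) :
    ContDiff ℝ (⊤:ℕ∞) (fun y => Θ (t, y)) :=
  hΘ.comp (contDiff_const.prodMk contDiff_id)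

lemma hasDerivAt_slice (hΘ : ContDiff ℝ (⊤:ℕ∞) Θ) (t : ℝ) (x : E2) :
    HasDerivAt (fun s => Θ (s, x)) (fderiv ℝ Θ (t, x) (1, 0)) t := by
  have h := (hΘ.differentiable (by simp) (t, x)).hasFDerivAt
  have h2 : HasDerivAt (fun s : ℝ => (s, x)) ((1:ℝ), (0:E2)) t :=
    (hasDerivAt_id t).prodMk (hasDerivAt_const t x)
  exact h.comp_hasDerivAt t h2

lemma deriv_slice (hΘ : ContDiff ℝ (⊤:ℕ∞) Θ) (t : ℝ) (x : E2) :
    deriv (fun s => Θ (s, x)) t = fderiv ℝ Θ (t, x) (1, 0) :=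
  (hasDerivAt_slice hΘ t x).deriv

lemma fderiv_slice_x (hΘ : ContDiff ℝ (⊤:ℕ∞) Θ) (t : ℝ) (x : E2) (v : E2) :
    fderiv ℝ (fun y => Θ (t, y)) x v = fderiv ℝ Θ (t, x) (0, v) := by
  have h := (hΘ.differentiable (by simp) (t, x)).hasFDerivAt
  have h2 : HasFDerivAt (fun y : E2 => ((t : ℝ), y))
      ((0 : E2 →L[ℝ] ℝ).prod (ContinuousLinearMap.id ℝ E2)) x :=
    (hasFDerivAt_const t x).prodMk (hasFDerivAt_id x)
  have h3 : fderiv ℝ (fun y => Θ (t, y)) x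
      = (fderiv ℝ Θ (t, x)).comp ((0 : E2 →L[ℝ] ℝ).prod (ContinuousLinearMap.id ℝ E2)) :=
    (h.comp x h2).fderiv
  rw [h3]; rfl

lemma pd_slice_eq (hΘ : ContDiff ℝ (⊤:ℕ∞) Θ) (t : ℝ) (x : E2) (i : Fin 2) :
    pd (fun y => Θ (t, y)) i x = fderiv ℝ Θ (t, x) (0, EuclideanSpace.single i 1) :=
  fderiv_slice_x hΘ t x _

lemma contDiff_joint_pd (hΘ : ContDiff ℝ (⊤:ℕ∞) Θ) (i : Fin 2) :
    ContDiff ℝ (⊤:ℕ∞) (fun q : ℝ × E2 => pd (fun y => Θ (q.1, y)) i q.2) := by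
  have he : (fun q : ℝ × E2 => pd (fun y => Θ (q.1, y)) i q.2)
      = fun q => fderiv ℝ Θ q (0, EuclideanSpace.single i 1) := by
    funext q; exact pd_slice_eq hΘ q.1 q.2 i
  rw [he]
  exact (hΘ.fderiv_right (by simp)).clm_apply contDiff_const

lemma continuous_joint_lap (hΘ : ContDiff ℝ (⊤:ℕ∞) Θ) :
    Continuous (fun q : ℝ × E2 => lap (fun y => Θ (q.1, y)) q.2) := by
  have he : (fun q : ℝ × E2 => lap (fun y => Θ (q.1, y)) q.2)
      = fun q => ∑ i, pd (fun y =>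
          (fun r : ℝ × E2 => pd (fun z => Θ (r.1, z)) i r.2) (q.1, y)) i q.2 := rfl
  rw [he]
  exact continuous_finset_sum _ fun i _ =>
    (contDiff_joint_pd (contDiff_joint_pd hΘ i) i).continuous

lemma continuous_joint_deriv_t (hΘ : ContDiff ℝ (⊤:ℕ∞) Θ) :
    Continuous (fun q : ℝ × E2 => deriv (fun s => Θ (s, q.2)) q.1) := by
  have he : (fun q : ℝ × E2 => deriv (fun s => Θ (s, q.2)) q.1)
      = fun q => fderiv ℝ Θ q ((1:ℝ), (0:E2)) := by
    funext q; exact deriv_slice hΘ q.1 q.2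
  rw [he]
  exact (hΘ.continuous_fderiv (by simp)).clm_apply continuous_const

end Chunk2

section Chunk3
open Set MeasurableEquiv

/-- The measure-preserving identification `ℝ × ℝ ≃ E2`. -/
def Ψ : ℝ × ℝ ≃ᵐ E2 :=
  (((MeasurableEquiv.toLp 2 (Fin 2 → ℝ)).symm).trans (MeasurableEquiv.piFinTwo fun _ => ℝ)).symm

lemma measurePreserving_Ψ : MeasurePreserving Ψ volume volume :=
  ((EuclideanSpace.volume_preserving_symm_measurableEquiv_toLp (Fin 2)).trans
    (volume_preserving_piFinTwo fun _ => ℝ)).symm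

lemma Ψ_apply (a b : ℝ) :
    Ψ (a, b) = a • EuclideanSpace.single 0 (1:ℝ) + b • EuclideanSpace.single 1 (1:ℝ) := by
  ext j
  fin_cases j <;>
    simp [Ψ, MeasurableEquiv.piFinTwo,
      MeasurableEquiv.trans, MeasurableEquiv.symm, piFinTwoEquiv, WithLp.equiv,
      EuclideanSpace.single_apply] <;> rfl

lemma single_eq_ivec (i : Fin 2) :
    EuclideanSpace.single i (1:ℝ) = ivec (fun j => if j = i then 1 else 0) := by
  ext j
  simp [ivec, EuclideanSpace.single_apply, apply_ite (fun n : ℤ => (n : ℝ))]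

lemma ftc_line {g : E2 → ℝ} (hg : ContDiff ℝ (⊤:ℕ∞) g) (hper : Periodic2 g)
    (x : E2) (i : Fin 2) :
    ∫ s in Set.Ico (0:ℝ) 1, pd g i (x + s • EuclideanSpace.single i (1:ℝ)) = 0 := by
  have hγ : ∀ s : ℝ, HasDerivAt (fun s : ℝ => x + s • EuclideanSpace.single i (1:ℝ))
      (EuclideanSpace.single i (1:ℝ)) s := by
    intro s
    simpa using ((hasDerivAt_id s).smul_const (EuclideanSpace.single i (1:ℝ))).const_add x
  have hderiv : ∀ s : ℝ, HasDerivAt (fun s : ℝ => g (x + s • EuclideanSpace.single i (1:ℝ)))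
      (pd g i (x + s • EuclideanSpace.single i (1:ℝ))) s := by
    intro s
    exact ((hg.differentiable (by simp) _).hasFDerivAt).comp_hasDerivAt s (hγ s)
  have hcont : Continuous fun s : ℝ => pd g i (x + s • EuclideanSpace.single i (1:ℝ)) := by
    exact (contDiff_pd hg i).continuous.comp (by fun_prop)
  have h1 : ∫ s in Set.Ico (0:ℝ) 1, pd g i (x + s • EuclideanSpace.single i (1:ℝ))
      = ∫ s in (0:ℝ)..1, pd g i (x + s • EuclideanSpace.single i (1:ℝ)) := by
    rw [intervalIntegral.integral_of_le zero_le_one, setIntegral_congr_set Ico_ae_eq_Ioc]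
  rw [h1, intervalIntegral.integral_eq_sub_of_hasDerivAt (fun s _ => hderiv s)
    (hcont.intervalIntegrable 0 1)]
  have : x + (1:ℝ) • EuclideanSpace.single i (1:ℝ)
      = x + ivec (fun j => if j = i then 1 else 0) := by
    rw [one_smul, single_eq_ivec]
  rw [this, hper x]
  simp

lemma integral_pd_zero {g : E2 → ℝ} (hg : ContDiff ℝ (⊤:ℕ∞) g) (hper : Periodic2 g)
    (i : Fin 2) : ∫ x, pd g i x ∂μT = 0 := by
  have hΨT2 : Ψ ⁻¹' T2 = Set.Ico (0:ℝ) 1 ×ˢ Set.Ico (0:ℝ) 1 := by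
    ext p
    obtain ⟨a, b⟩ := p
    simp only [Set.mem_preimage, T2, Set.mem_setOf_eq, Ψ_apply, Set.mem_prod]
    constructor
    · intro h
      refine ⟨?_, ?_⟩
      · simpa [EuclideanSpace.single_apply] using h 0
      · simpa [EuclideanSpace.single_apply] using h 1
    · rintro ⟨h1, h2⟩ j
      fin_cases j <;> simpa [EuclideanSpace.single_apply]
  have hc : Continuous fun p : ℝ × ℝ => pd g i (Ψ p) := by
    have : Continuous fun p : ℝ × ℝ => (Ψ p : E2) := by
      have : (fun p : ℝ × ℝ => (Ψ p : E2)) = fun p =>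
          p.1 • EuclideanSpace.single 0 (1:ℝ) + p.2 • EuclideanSpace.single 1 (1:ℝ) := by
        funext p; exact Ψ_apply p.1 p.2
      rw [this]; fun_prop
    exact (contDiff_pd hg i).continuous.comp this
  have hint : IntegrableOn (fun p : ℝ × ℝ => pd g i (Ψ p))
      (Set.Ico (0:ℝ) 1 ×ˢ Set.Ico (0:ℝ) 1) (volume.prod volume) := by
    have : IntegrableOn (fun p : ℝ × ℝ => pd g i (Ψ p))
        (Set.Icc (0:ℝ) 1 ×ˢ Set.Icc (0:ℝ) 1) (volume.prod volume) := by
      rw [← MeasureTheory.Measure.volume_eq_prod]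
      exact hc.continuousOn.integrableOn_compact (isCompact_Icc.prod isCompact_Icc)
    exact this.mono_set (Set.prod_mono Set.Ico_subset_Icc_self Set.Ico_subset_Icc_self)
  have key : ∫ x, pd g i x ∂μT
      = ∫ p in Set.Ico (0:ℝ) 1 ×ˢ Set.Ico (0:ℝ) 1, pd g i (Ψ p) := by
    rw [μT, ← hΨT2]
    rw [← measurePreserving_Ψ.setIntegral_preimage_emb Ψ.measurableEmbedding]
  rw [key, MeasureTheory.Measure.volume_eq_prod,
    MeasureTheory.setIntegral_prod _ hint]
  by_cases hi : i = 1
  · subst hi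
    have : ∀ a : ℝ, ∫ b in Set.Ico (0:ℝ) 1, pd g 1 (Ψ (a, b)) = 0 := by
      intro a
      have : ∀ b : ℝ, Ψ (a, b) = (a • EuclideanSpace.single 0 (1:ℝ))
          + b • EuclideanSpace.single 1 (1:ℝ) := fun b => Ψ_apply a b
      simp only [this]
      exact ftc_line hg hper _ 1
    simp only [this, integral_zero]
  · have hi0 : i = 0 := by omega
    subst hi0
    have hswap : ∫ a in Set.Ico (0:ℝ) 1, ∫ b in Set.Ico (0:ℝ) 1, pd g 0 (Ψ (a, b))
        = ∫ b in Set.Ico (0:ℝ) 1, ∫ a in Set.Ico (0:ℝ) 1, pd g 0 (Ψ (a, b)) := by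
      apply MeasureTheory.integral_integral_swap
      rw [Function.uncurry_def, MeasureTheory.Measure.prod_restrict]
      exact hint
    rw [hswap]
    have : ∀ b : ℝ, ∫ a in Set.Ico (0:ℝ) 1, pd g 0 (Ψ (a, b)) = 0 := by
      intro b
      have he : ∀ a : ℝ, Ψ (a, b) = (b • EuclideanSpace.single 1 (1:ℝ))
          + a • EuclideanSpace.single 0 (1:ℝ) := by
        intro a; rw [Ψ_apply]; abel
      simp only [he]
      exact ftc_line hg hper _ 0
    simp only [this, integral_zero]

end Chunk3

section Chunk4
open Set Real

lemma pd_mul {φ ψ : E2 → ℝ} (hφ : Differentiable ℝ φ) (hψ : Differentiable ℝ ψ)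
    (i : Fin 2) (x : E2) :
    pd (fun y => φ y * ψ y) i x = φ x * pd ψ i x + ψ x * pd φ i x := by
  have := fderiv_mul (𝕜 := ℝ) (hφ x) (hψ x)
  simp only [pd, ← Pi.mul_def, this]
  simp [mul_comm]

lemma pd_rpow {h : E2 → ℝ} (hh : Differentiable ℝ h) {ε : ℝ} (hε : 0 < ε)
    (hnn : ∀ y, 0 ≤ h y) (p : ℝ) (i : Fin 2) (x : E2) :
    pd (fun y => (h y + ε) ^ p) i x = p * (h x + ε) ^ (p - 1) * pd h i x := by
  have hpos : h x + ε ≠ 0 := by have := hnn x; positivity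
  have h1 : HasFDerivAt (fun y => h y + ε) (fderiv ℝ h x) x :=
    ((hh x).hasFDerivAt).add_const ε
  have h2 : HasDerivAt (fun z : ℝ => z ^ p) (p * (h x + ε) ^ (p - 1)) (h x + ε) :=
    Real.hasDerivAt_rpow_const (Or.inl hpos)
  have h3 : HasFDerivAt (fun y => (h y + ε) ^ p)
      ((p * (h x + ε) ^ (p - 1)) • fderiv ℝ h x) x := by
    have := h2.comp_hasFDerivAt x h1; exact this
  rw [pd, h3.fderiv]
  simp only [ContinuousLinearMap.coe_smul', Pi.smul_apply, smul_eq_mul]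
  rfl

lemma contDiff_rpow_shift {h : E2 → ℝ} (hh : ContDiff ℝ (⊤:ℕ∞) h) {ε : ℝ} (hε : 0 < ε)
    (hnn : ∀ y, 0 ≤ h y) (p : ℝ) :
    ContDiff ℝ (⊤:ℕ∞) (fun y => (h y + ε) ^ p) := by
  rw [contDiff_iff_contDiffAt]
  intro x
  exact ((hh.add contDiff_const).contDiffAt).rpow_const_of_ne (by have := hnn x; positivity)

lemma pd_periodic {f : E2 → ℝ} (hf : Differentiable ℝ f) (hper : Periodic2 f) (i : Fin 2) :
    Periodic2 (pd f i) := by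
  intro x k
  have hτ : HasFDerivAt (fun y : E2 => y + ivec k) (ContinuousLinearMap.id ℝ E2) x :=
    (hasFDerivAt_id x).add_const (ivec k)
  have hcomp : HasFDerivAt (fun y => f (y + ivec k))
      ((fderiv ℝ f (x + ivec k)).comp (ContinuousLinearMap.id ℝ E2)) x :=
    ((hf (x + ivec k)).hasFDerivAt).comp x hτ
  have heq : (fun y => f (y + ivec k)) = f := by funext y; exact hper y k
  rw [heq] at hcomp
  have := hcomp.fderiv
  simp only [pd, this]
  rfl

lemma contDiff_comp_proj {uu : E2 → E2} (hu : ContDiff ℝ (⊤:ℕ∞) uu) (i : Fin 2) :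
    ContDiff ℝ (⊤:ℕ∞) (fun y => uu y i) :=
  (EuclideanSpace.proj (𝕜 := ℝ) i).contDiff.comp hu

lemma integral_advect_zero {uu : E2 → E2} {φ : E2 → ℝ}
    (hu : ContDiff ℝ (⊤:ℕ∞) uu) (huper : PeriodicV uu)
    (hdiv : ∀ x, divergence uu x = 0)
    (hφ : ContDiff ℝ (⊤:ℕ∞) φ) (hφper : Periodic2 φ) :
    ∫ x, advect uu φ x ∂μT = 0 := by
  have key : ∀ x, advect uu φ x = ∑ i, pd (fun y => uu y i * φ y) i x := by
    intro x
    have : ∀ i, pd (fun y => uu y i * φ y) i x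
        = uu x i * pd φ i x + φ x * pd (fun y => uu y i) i x := fun i =>
      pd_mul ((contDiff_comp_proj hu i).differentiable (by simp))
        (hφ.differentiable (by simp)) i x
    simp only [advect, this, Finset.sum_add_distrib, ← Finset.mul_sum]
    have hd := hdiv x
    rw [divergence] at hd
    rw [hd, mul_zero, add_zero]
  rw [MeasureTheory.integral_congr_ae (Filter.Eventually.of_forall key)]
  rw [MeasureTheory.integral_finset_sum]
  · apply Finset.sum_eq_zero
    intro i _
    apply integral_pd_zero ((contDiff_comp_proj hu i).mul hφ) _ i
    intro x k
    simp only [huper x k, hφper x k]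
  · intro i _
    exact integrable_muT_of_continuous
      (contDiff_pd ((contDiff_comp_proj hu i).mul hφ) i).continuous

lemma integral_rpow_lap_nonpos {h : E2 → ℝ} (hh : ContDiff ℝ (⊤:ℕ∞) h)
    (hper : Periodic2 h) (hnn : ∀ y, 0 ≤ h y) {ε : ℝ} (hε : 0 < ε) {p : ℝ} (hp : 1 ≤ p) :
    ∫ x, (h x + ε) ^ (p - 1) * lap h x ∂μT ≤ 0 := by
  set c : E2 → ℝ := fun y => (h y + ε) ^ (p - 1) with hc
  have hcd : ContDiff ℝ (⊤:ℕ∞) c := contDiff_rpow_shift hh hε hnn (p - 1)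
  have hkey : ∀ x, (∑ i, pd (fun y => c y * pd h i y) i x)
      = (p - 1) * (h x + ε) ^ (p - 2) * (∑ i, (pd h i x) ^ 2) + c x * lap h x := by
    intro x
    have hdiff := hh.differentiable (by simp)
    have : ∀ i, pd (fun y => c y * pd h i y) i x
        = c x * pd (fun y => pd h i y) i x
          + pd h i x * ((p - 1) * (h x + ε) ^ (p - 1 - 1) * pd h i x) := by
      intro i
      rw [pd_mul (hcd.differentiable (by simp))
        ((contDiff_pd hh i).differentiable (by simp)) i x]
      rw [pd_rpow hdiff hε hnn (p - 1) i x]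
    have he : p - 1 - 1 = p - 2 := by ring
    simp only [he] at this
    calc (∑ i, pd (fun y => c y * pd h i y) i x)
        = ∑ i, (c x * pd (fun y => pd h i y) i x
            + (p - 1) * (h x + ε) ^ (p - 2) * (pd h i x) ^ 2) := by
          refine Finset.sum_congr rfl fun i _ => ?_
          rw [this i]; ring
      _ = c x * (∑ i, pd (fun y => pd h i y) i x)
            + (p - 1) * (h x + ε) ^ (p - 2) * (∑ i, (pd h i x) ^ 2) := by
          rw [Finset.sum_add_distrib, ← Finset.mul_sum, ← Finset.mul_sum]
      _ = (p - 1) * (h x + ε) ^ (p - 2) * (∑ i, (pd h i x) ^ 2) + c x * lap h x := by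
          rw [lap]; ring
  have hsum0 : ∫ x, (∑ i, pd (fun y => c y * pd h i y) i x) ∂μT = 0 := by
    rw [MeasureTheory.integral_finset_sum]
    · apply Finset.sum_eq_zero
      intro i _
      apply integral_pd_zero (hcd.mul (contDiff_pd hh i)) _ i
      intro x k
      have h1 : c (x + ivec k) = c x := by simp only [hc, hper x k]
      have h2 := pd_periodic (hh.differentiable (by simp)) hper i x k
      simp only [h1, h2]
    · intro i _
      exact integrable_muT_of_continuous
        (contDiff_pd (hcd.mul (contDiff_pd hh i)) i).continuous
  have hsplit : ∫ x, (∑ i, pd (fun y => c y * pd h i y) i x) ∂μT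
      = (∫ x, (p - 1) * (h x + ε) ^ (p - 2) * (∑ i, (pd h i x) ^ 2) ∂μT)
        + ∫ x, c x * lap h x ∂μT := by
    rw [← MeasureTheory.integral_add]
    · exact MeasureTheory.integral_congr_ae (Filter.Eventually.of_forall hkey)
    · apply integrable_muT_of_continuous
      have : Continuous fun x => (h x + ε) ^ (p - 2) :=
        (contDiff_rpow_shift hh hε hnn (p - 2)).continuous
      exact (continuous_const.mul this).mul
        (continuous_finset_sum _ fun i _ => ((contDiff_pd hh i).continuous.pow 2))
    · exact integrable_muT_of_continuous (hcd.continuous.mul (continuous_lap hh))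
  have hnn2 : 0 ≤ ∫ x, (p - 1) * (h x + ε) ^ (p - 2) * (∑ i, (pd h i x) ^ 2) ∂μT := by
    apply MeasureTheory.integral_nonneg
    intro x
    show (0:ℝ) ≤ _
    have h1 : (0:ℝ) ≤ (h x + ε) ^ (p - 2) :=
      Real.rpow_nonneg (add_nonneg (hnn x) hε.le) _
    have hs : (0:ℝ) ≤ ∑ i, (pd h i x) ^ 2 :=
      Finset.sum_nonneg fun i _ => sq_nonneg _
    exact mul_nonneg (mul_nonneg (by linarith) h1) hs
  linarith [hsum0 ▸ hsplit]

lemma young_exp {a b : ℝ} (hb : 0 < b) : a * b ≤ Real.exp a + b * Real.log b := by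
  have h1 := Real.add_one_le_exp (a - Real.log b)
  have h2 : Real.exp (a - Real.log b) = Real.exp a / b := by
    rw [Real.exp_sub, Real.exp_log hb]
  rw [h2] at h1
  have h3 : b * (a - Real.log b + 1) ≤ Real.exp a := by
    rw [mul_comm]
    calc (a - Real.log b + 1) * b ≤ (Real.exp a / b) * b := by
          apply mul_le_mul_of_nonneg_right h1 hb.le
      _ = Real.exp a := by field_simp
  nlinarith

lemma integral_exp_le {f : E2 → ℝ} {CK : ℝ} (hCK : 0 ≤ CK) (hf : Continuous f)
    (hnn : ∀ x, 0 ≤ f x)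
    (hle : ∫⁻ x, ENNReal.ofReal (f x) ∂μT ≤ ENNReal.ofReal CK) :
    ∫ x, f x ∂μT ≤ CK := by
  rw [MeasureTheory.integral_eq_lintegral_of_nonneg_ae
    (Filter.Eventually.of_forall hnn) hf.aestronglyMeasurable]
  calc (∫⁻ x, ENNReal.ofReal (f x) ∂μT).toReal
      ≤ (ENNReal.ofReal CK).toReal := ENNReal.toReal_mono ENNReal.ofReal_ne_top hle
    _ = CK := ENNReal.toReal_ofReal hCK

end Chunk4

section Chunk5
open Real

lemma eLpNorm_eq_integral_rpow {g : E2 → ℝ} (hg : Continuous g) (hnn : ∀ x, 0 ≤ g x)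
    {q : ℝ} (hq : 0 < q) :
    eLpNorm g (ENNReal.ofReal q) μT
      = ENNReal.ofReal ((∫ x, g x ^ q ∂μT) ^ (1/q)) := by
  rw [MeasureTheory.eLpNorm_eq_lintegral_rpow_enorm_toReal
    (by simp [hq, hq.le]) (by simp)]
  have htr : (ENNReal.ofReal q).toReal = q := ENNReal.toReal_ofReal hq.le
  rw [htr]
  have h1 : ∀ x, (‖g x‖ₑ) ^ q = ENNReal.ofReal (g x ^ q) := by
    intro x
    rw [← ENNReal.ofReal_rpow_of_nonneg (hnn x) hq.le]
    congr 1
    exact Real.enorm_of_nonneg (hnn x)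
  simp_rw [h1]
  rw [← MeasureTheory.ofReal_integral_eq_lintegral_ofReal]
  · rw [← ENNReal.ofReal_rpow_of_nonneg
      (MeasureTheory.integral_nonneg fun x => Real.rpow_nonneg (hnn x) q)
      (by positivity)]
  · exact integrable_muT_of_continuous (hg.rpow_const fun x => Or.inr hq.le)
  · exact Filter.Eventually.of_forall fun x => Real.rpow_nonneg (hnn x) q

lemma integral_rpow_mono_exp {g : E2 → ℝ} (hg : Continuous g) (hnn : ∀ x, 0 ≤ g x)
    {q r : ℝ} (hq : 0 < q) (hqr : q ≤ r) :
    (∫ x, g x ^ q ∂μT) ^ (1/q) ≤ (∫ x, g x ^ r ∂μT) ^ (1/r) := by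
  have hr : 0 < r := lt_of_lt_of_le hq hqr
  have h := MeasureTheory.eLpNorm_le_eLpNorm_of_exponent_le
    (μ := μT) (p := ENNReal.ofReal q) (q := ENNReal.ofReal r)
    (ENNReal.ofReal_le_ofReal hqr) hg.aestronglyMeasurable
  rw [eLpNorm_eq_integral_rpow hg hnn hq, eLpNorm_eq_integral_rpow hg hnn hr] at h
  rw [ENNReal.ofReal_le_ofReal_iff (Real.rpow_nonneg
    (MeasureTheory.integral_nonneg fun x => Real.rpow_nonneg (hnn x) r) _)] at h
  exact h

lemma integral_rpow_le_rpow {g : E2 → ℝ} (hg : Continuous g) (hnn : ∀ x, 0 ≤ g x)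
    {q r : ℝ} (hq : 0 < q) (hqr : q ≤ r) :
    (∫ x, g x ^ q ∂μT) ≤ ((∫ x, g x ^ r ∂μT) ^ (1/r)) ^ q := by
  have h := integral_rpow_mono_exp hg hnn hq hqr
  have h2 := Real.rpow_le_rpow (Real.rpow_nonneg
    (MeasureTheory.integral_nonneg fun x => Real.rpow_nonneg (hnn x) q) _) h hq.le
  rwa [← Real.rpow_mul (MeasureTheory.integral_nonneg
      fun x => Real.rpow_nonneg (hnn x) q), one_div, inv_mul_cancel₀ hq.ne',
    Real.rpow_one] at h2

end Chunk5

section Chunk6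
open Real

lemma continuous_gradVNorm {uu : E2 → E2} (hu : ContDiff ℝ (⊤:ℕ∞) uu) :
    Continuous (gradVNorm uu) := by
  apply Real.continuous_sqrt.comp
  exact continuous_finset_sum _ fun i _ => continuous_finset_sum _ fun j _ =>
    ((contDiff_pd (contDiff_comp_proj hu i) j).continuous.pow 2)

lemma gradVNorm_nonneg (uu : E2 → E2) (x : E2) : 0 ≤ gradVNorm uu x :=
  Real.sqrt_nonneg _

lemma continuous_advect {uu : E2 → E2} {h : E2 → ℝ}
    (hu : ContDiff ℝ (⊤:ℕ∞) uu) (hh : ContDiff ℝ (⊤:ℕ∞) h) :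
    Continuous (advect uu h) :=
  continuous_finset_sum _ fun i _ =>
    ((contDiff_comp_proj hu i).continuous.mul (contDiff_pd hh i).continuous)

lemma entropy_step
    {β CK F ν ε p : ℝ} (hβ : 0 < β) (hCK : 0 < CK) (hF : 0 ≤ F) (hν : 0 ≤ ν)
    (hε : 0 < ε) (hp2 : 2 ≤ p)
    {uu : E2 → E2} (hu : ContDiff ℝ (⊤:ℕ∞) uu) (huper : PeriodicV uu)
    (hdiv : ∀ x, divergence uu x = 0)
    (hexp : ∫ x, Real.exp (β * gradVNorm uu x) ∂μT ≤ CK)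
    {h : E2 → ℝ} (hh : ContDiff ℝ (⊤:ℕ∞) h) (hper : Periodic2 h) (hnn : ∀ x, 0 ≤ h x)
    {dh : E2 → ℝ} (hdh : Continuous dh)
    (hpde : ∀ x, dh x ≤ ν * lap h x - advect uu h x + gradVNorm uu x * h x + F) :
    ∫ x, (p * (h x + ε) ^ (p - 1) * dh x
        + (-(p^2)/β) * ((h x + ε) ^ p * Real.log (h x + ε))) ∂μT
      ≤ (p/β) * CK * (∫ x, (h x + ε) ^ p ∂μT)
        - (p/β) * (∫ x, (h x + ε) ^ p ∂μT) * Real.log (∫ x, (h x + ε) ^ p ∂μT)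
        + p * F * ((∫ x, (h x + ε) ^ p ∂μT) ^ (1/p)) ^ (p - 1) := by
  have hp0 : 0 < p := by linarith
  have hp1 : 1 ≤ p := by linarith
  set g : E2 → ℝ := fun x => h x + ε with hgdef
  have hgpos : ∀ x, 0 < g x := fun x => by have := hnn x; simp only [hgdef]; linarith
  have hgc : Continuous g := (hh.continuous).add continuous_const
  have hgnn : ∀ x, 0 ≤ g x := fun x => (hgpos x).le
  set φ : E2 → ℝ := fun x => g x ^ p with hφdef
  set φ₁ : E2 → ℝ := fun x => g x ^ (p - 1) with hφ₁def
  set H : ℝ := ∫ x, φ x ∂μT with hHdef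
  set a : E2 → ℝ := gradVNorm uu with hadef
  have hφc : Continuous φ := (contDiff_rpow_shift hh hε hnn p).continuous
  have hφ₁c : Continuous φ₁ := (contDiff_rpow_shift hh hε hnn (p-1)).continuous
  have hφpos : ∀ x, 0 < φ x := fun x => Real.rpow_pos_of_pos (hgpos x) p
  have hφ₁pos : ∀ x, 0 < φ₁ x := fun x => Real.rpow_pos_of_pos (hgpos x) (p-1)
  have hac : Continuous a := continuous_gradVNorm hu
  have hann : ∀ x, 0 ≤ a x := gradVNorm_nonneg uu
  have hlogc : Continuous fun x => Real.log (g x) :=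
    hgc.log fun x => (hgpos x).ne'
  have hlapc : Continuous (lap h) := continuous_lap hh
  have hadvc : Continuous (advect uu h) := continuous_advect hu hh
  -- positivity of H
  have hHpos : 0 < H := by
    have h1 : ∀ x, (ε : ℝ) ^ p ≤ φ x := by
      intro x
      exact Real.rpow_le_rpow hε.le (by have := hnn x; simp only [hgdef]; linarith) hp0.le
    have h2 : (ε : ℝ) ^ p ≤ H := by
      have := MeasureTheory.integral_mono (MeasureTheory.integrable_const _)
        (integrable_muT_of_continuous hφc) h1
      simpa [MeasureTheory.integral_const, MeasureTheory.measure_univ] using this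
    exact lt_of_lt_of_le (Real.rpow_pos_of_pos hε p) h2
  have hHnn : 0 ≤ H := hHpos.le
  -- pointwise bound I1 ≤ I2
  set c : ℝ := -(p^2)/β with hcdef
  set I2 : E2 → ℝ := fun x =>
    (ν * p) * (φ₁ x * lap h x) + (-p) * (φ₁ x * advect uu h x)
    + p * (a x * φ x) + (p * F) * φ₁ x + c * (φ x * Real.log (g x)) with hI2def
  have hpt : ∀ x, p * φ₁ x * dh x + c * (φ x * Real.log (g x)) ≤ I2 x := by
    intro x
    have h1 : dh x ≤ ν * lap h x - advect uu h x + a x * g x + F := by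
      have := hpde x
      have h2 : a x * h x ≤ a x * g x := by
        apply mul_le_mul_of_nonneg_left _ (hann x)
        simp only [hgdef]; linarith
      linarith
    have h3 : p * φ₁ x * dh x ≤ p * φ₁ x * (ν * lap h x - advect uu h x + a x * g x + F) :=
      mul_le_mul_of_nonneg_left h1 (mul_nonneg hp0.le (hφ₁pos x).le)
    have h4 : φ₁ x * g x = φ x := by
      simp only [hφ₁def, hφdef]
      have h6 : g x ^ (p - 1) * g x ^ (1:ℝ) = g x ^ p := by
        rw [← Real.rpow_add (hgpos x)]; norm_num
      simpa [Real.rpow_one] using h6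
    have h5 : p * φ₁ x * (ν * lap h x - advect uu h x + a x * g x + F)
        + c * (φ x * Real.log (g x)) = I2 x := by
      simp only [hI2def]
      rw [← h4]
      ring
    linarith
  have hI1int : MeasureTheory.Integrable (fun x =>
      p * φ₁ x * dh x + c * (φ x * Real.log (g x))) μT :=
    integrable_muT_of_continuous (((continuous_const.mul hφ₁c).mul hdh).add
      (continuous_const.mul (hφc.mul hlogc)))
  have int1 : MeasureTheory.Integrable (fun x => φ₁ x * lap h x) μT :=
    integrable_muT_of_continuous (hφ₁c.mul hlapc)
  have int2 : MeasureTheory.Integrable (fun x => φ₁ x * advect uu h x) μT :=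
    integrable_muT_of_continuous (hφ₁c.mul hadvc)
  have int3 : MeasureTheory.Integrable (fun x => a x * φ x) μT :=
    integrable_muT_of_continuous (hac.mul hφc)
  have int4 : MeasureTheory.Integrable φ₁ μT := integrable_muT_of_continuous hφ₁c
  have int5 : MeasureTheory.Integrable (fun x => φ x * Real.log (g x)) μT :=
    integrable_muT_of_continuous (hφc.mul hlogc)
  have hI2int : MeasureTheory.Integrable I2 μT := by
    simp only [hI2def]
    exact ((((int1.const_mul _).add (int2.const_mul _)).add (int3.const_mul _)).add
      (int4.const_mul _)).add (int5.const_mul _)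
  have hmono := MeasureTheory.integral_mono hI1int hI2int hpt
  -- split I2
  have hsplit : ∫ x, I2 x ∂μT
      = (ν * p) * (∫ x, φ₁ x * lap h x ∂μT)
        + (-p) * (∫ x, φ₁ x * advect uu h x ∂μT)
        + p * (∫ x, a x * φ x ∂μT) + (p * F) * (∫ x, φ₁ x ∂μT)
        + c * (∫ x, φ x * Real.log (g x) ∂μT) := by
    simp only [hI2def]
    have S2 : MeasureTheory.Integrable (fun x =>
        (ν*p)*(φ₁ x * lap h x) + (-p)*(φ₁ x * advect uu h x)) μT :=
      integrable_muT_of_continuous ((continuous_const.mul (hφ₁c.mul hlapc)).add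
        (continuous_const.mul (hφ₁c.mul hadvc)))
    have S3 : MeasureTheory.Integrable (fun x =>
        (ν*p)*(φ₁ x * lap h x) + (-p)*(φ₁ x * advect uu h x) + p*(a x * φ x)) μT :=
      integrable_muT_of_continuous (((continuous_const.mul (hφ₁c.mul hlapc)).add
        (continuous_const.mul (hφ₁c.mul hadvc))).add (continuous_const.mul (hac.mul hφc)))
    have S4 : MeasureTheory.Integrable (fun x =>
        (ν*p)*(φ₁ x * lap h x) + (-p)*(φ₁ x * advect uu h x) + p*(a x * φ x)
          + (p*F)*φ₁ x) μT :=
      integrable_muT_of_continuous ((((continuous_const.mul (hφ₁c.mul hlapc)).add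
        (continuous_const.mul (hφ₁c.mul hadvc))).add
        (continuous_const.mul (hac.mul hφc))).add (continuous_const.mul hφ₁c))
    rw [MeasureTheory.integral_add S4 (int5.const_mul _),
      MeasureTheory.integral_add S3 (int4.const_mul _),
      MeasureTheory.integral_add S2 (int3.const_mul _),
      MeasureTheory.integral_add (int1.const_mul _) (int2.const_mul _)]
    simp only [MeasureTheory.integral_const_mul]
  -- Term 1 : diffusion
  have hT1 : (ν * p) * (∫ x, φ₁ x * lap h x ∂μT) ≤ 0 := by
    have hlap := integral_rpow_lap_nonpos hh hper hnn hε hp1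
    have hEq : ∫ x, φ₁ x * lap h x ∂μT = ∫ x, (h x + ε) ^ (p - 1) * lap h x ∂μT := rfl
    rw [hEq]
    exact mul_nonpos_iff.mpr (Or.inl ⟨(mul_nonneg hν hp0.le), hlap⟩)
  -- Term 2 : transport
  have hψc := contDiff_rpow_shift hh hε hnn p
  have hadv0 : ∫ x, advect uu (fun y => (h y + ε) ^ p) x ∂μT = 0 :=
    integral_advect_zero hu huper hdiv hψc (fun x k => by simp only [hper x k])
  have hadveq : ∀ x, advect uu (fun y => (h y + ε) ^ p) x = p * (φ₁ x * advect uu h x) := by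
    intro x
    have hpd : ∀ i, pd (fun y => (h y + ε) ^ p) i x = p * (h x + ε) ^ (p - 1) * pd h i x :=
      fun i => pd_rpow (hh.differentiable (by simp)) hε hnn p i x
    have hrhs : p * (φ₁ x * advect uu h x)
        = ∑ i, p * (φ₁ x * (uu x i * pd h i x)) := by
      rw [advect, Finset.mul_sum, Finset.mul_sum]
    rw [advect, hrhs]
    refine Finset.sum_congr rfl fun i _ => ?_
    rw [hpd i]
    simp only [hφ₁def, hgdef]
    ring
  have hT2 : ∫ x, φ₁ x * advect uu h x ∂μT = 0 := by
    have h0 : ∫ x, p * (φ₁ x * advect uu h x) ∂μT = 0 := by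
      rw [← MeasureTheory.integral_congr_ae (Filter.Eventually.of_forall hadveq)]
      exact hadv0
    rw [MeasureTheory.integral_const_mul] at h0
    exact (mul_eq_zero.mp h0).resolve_left hp0.ne'
  -- Term 3 : Young / entropy
  have hlogφc : Continuous fun x => Real.log (φ x) := hφc.log fun x => (hφpos x).ne'
  have hexpc : Continuous fun x => Real.exp (β * a x) :=
    Real.continuous_exp.comp (continuous_const.mul hac)
  have hyoung : ∀ x, a x * φ x
      ≤ (1/β) * (H * Real.exp (β * a x) + φ x * Real.log (φ x) - φ x * Real.log H) := by
    intro x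
    have hb : 0 < φ x / H := div_pos (hφpos x) hHpos
    have hy := young_exp (a := β * a x) hb
    have hlog : Real.log (φ x / H) = Real.log (φ x) - Real.log H :=
      Real.log_div (hφpos x).ne' hHpos.ne'
    rw [hlog] at hy
    have h2 := mul_le_mul_of_nonneg_left hy hHnn
    have e1 : H * (β * a x * (φ x / H)) = β * (a x * φ x) := by
      field_simp
    have e2 : H * (Real.exp (β * a x) + φ x / H * (Real.log (φ x) - Real.log H))
        = H * Real.exp (β * a x) + φ x * Real.log (φ x) - φ x * Real.log H := by
      field_simp
      ring
    rw [e1, e2] at h2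
    have h3 := mul_le_mul_of_nonneg_left h2 (le_of_lt (by positivity : (0:ℝ) < 1/β))
    calc a x * φ x = (1/β) * (β * (a x * φ x)) := by field_simp
      _ ≤ (1/β) * (H * Real.exp (β * a x) + φ x * Real.log (φ x) - φ x * Real.log H) := h3
  have hT3 : ∫ x, a x * φ x ∂μT
      ≤ (1/β) * (H * CK + (∫ x, φ x * Real.log (φ x) ∂μT) - H * Real.log H) := by
    have intexp : MeasureTheory.Integrable (fun x => Real.exp (β * a x)) μT :=
      integrable_muT_of_continuous hexpc
    have intRHS : MeasureTheory.Integrable (fun x =>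
        (1/β) * (H * Real.exp (β * a x) + φ x * Real.log (φ x) - φ x * Real.log H)) μT :=
      integrable_muT_of_continuous (continuous_const.mul
        (((continuous_const.mul hexpc).add (hφc.mul hlogφc)).sub (hφc.mul continuous_const)))
    have h1 := MeasureTheory.integral_mono int3 intRHS hyoung
    rw [MeasureTheory.integral_const_mul] at h1
    have hsplit2 : ∫ x, (H * Real.exp (β * a x) + φ x * Real.log (φ x)
          - φ x * Real.log H) ∂μT
        = H * (∫ x, Real.exp (β * a x) ∂μT) + (∫ x, φ x * Real.log (φ x) ∂μT)
          - H * Real.log H := by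
      have W1 : MeasureTheory.Integrable
          (fun x => H * Real.exp (β * a x) + φ x * Real.log (φ x)) μT :=
        integrable_muT_of_continuous ((continuous_const.mul hexpc).add (hφc.mul hlogφc))
      have W2 : MeasureTheory.Integrable (fun x => φ x * Real.log H) μT :=
        integrable_muT_of_continuous (hφc.mul continuous_const)
      rw [MeasureTheory.integral_sub W1 W2,
        MeasureTheory.integral_add (integrable_muT_of_continuous (f := fun x => H * Real.exp (β * a x))
          (continuous_const.mul hexpc)) (integrable_muT_of_continuous (f := fun x => φ x * Real.log (φ x)) (hφc.mul hlogφc)),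
        MeasureTheory.integral_const_mul, MeasureTheory.integral_mul_const, ← hHdef]
    rw [hsplit2] at h1
    have hexpCK : ∫ x, Real.exp (β * a x) ∂μT ≤ CK := hexp
    have hmul : H * (∫ x, Real.exp (β * a x) ∂μT) ≤ H * CK :=
      mul_le_mul_of_nonneg_left hexpCK hHnn
    calc ∫ x, a x * φ x ∂μT
        ≤ (1/β) * (H * (∫ x, Real.exp (β * a x) ∂μT)
            + (∫ x, φ x * Real.log (φ x) ∂μT) - H * Real.log H) := h1
      _ ≤ (1/β) * (H * CK + (∫ x, φ x * Real.log (φ x) ∂μT) - H * Real.log H) := by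
          apply mul_le_mul_of_nonneg_left _ (le_of_lt (by positivity : (0:ℝ) < 1/β))
          linarith
  -- Term 4 : forcing
  have hT4 : ∫ x, φ₁ x ∂μT ≤ (H ^ (1/p)) ^ (p - 1) := by
    have := integral_rpow_le_rpow hgc hgnn (q := p - 1) (r := p)
      (by linarith) (by linarith)
    exact this
  -- Term 5 : entropy identity
  have hT5 : ∫ x, φ x * Real.log (φ x) ∂μT = p * ∫ x, φ x * Real.log (g x) ∂μT := by
    rw [← MeasureTheory.integral_const_mul]
    apply MeasureTheory.integral_congr_ae (Filter.Eventually.of_forall fun x => ?_)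
    have : Real.log (φ x) = p * Real.log (g x) := by
      simp only [hφdef]
      exact Real.log_rpow (hgpos x) p
    rw [this]
    ring
  -- assemble
  have hA3 : p * (∫ x, a x * φ x ∂μT)
      ≤ p * ((1/β) * (H * CK + (∫ x, φ x * Real.log (φ x) ∂μT) - H * Real.log H)) :=
    mul_le_mul_of_nonneg_left hT3 hp0.le
  have hA4 : (p * F) * (∫ x, φ₁ x ∂μT) ≤ (p * F) * ((H ^ (1/p)) ^ (p - 1)) :=
    mul_le_mul_of_nonneg_left hT4 (mul_nonneg hp0.le hF)
  have hc : c = -(p^2)/β := hcdef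
  have hβ' : β ≠ 0 := hβ.ne'
  calc ∫ x, (p * φ₁ x * dh x + c * (φ x * Real.log (g x))) ∂μT
      ≤ ∫ x, I2 x ∂μT := hmono
    _ = (ν * p) * (∫ x, φ₁ x * lap h x ∂μT)
        + (-p) * (∫ x, φ₁ x * advect uu h x ∂μT)
        + p * (∫ x, a x * φ x ∂μT) + (p * F) * (∫ x, φ₁ x ∂μT)
        + c * (∫ x, φ x * Real.log (g x) ∂μT) := hsplit
    _ ≤ (p/β) * CK * H - (p/β) * H * Real.log H + p * F * ((H ^ (1/p)) ^ (p - 1)) := by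
        rw [hT2, hT5] at *
        have hcancel : p * ((1/β) * (H * CK + p * (∫ x, φ x * Real.log (g x) ∂μT)
              - H * Real.log H)) + c * (∫ x, φ x * Real.log (g x) ∂μT)
            = (p/β) * CK * H - (p/β) * H * Real.log H := by
          rw [hcdef]
          field_simp
          ring
        rw [hT5] at hA3
        linarith [hT1, hA3, hA4, hcancel]

end Chunk6

section Chunk7
open Real Set MeasureTheory

lemma hasDerivAt_H {β p₀ ε : ℝ} (hβ : 0 < β) (hp₀ : 1 < p₀) (hε : 0 < ε)
    {θ : ℝ → E2 → ℝ} (hθ : ContDiff ℝ (⊤:ℕ∞) (fun q : ℝ × E2 => θ q.1 q.2))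
    (hθnn : ∀ t x, 0 ≤ θ t x)
    (t₀ : ℝ) (ht₀ : 0 ≤ t₀) :
    HasDerivAt (fun t => ∫ x, (θ t x + ε) ^ ((1/(2*p₀) + t/β)⁻¹) ∂μT)
      (∫ x, (deriv (fun s => θ s x) t₀ * (1/(2*p₀) + t₀/β)⁻¹
          * (θ t₀ x + ε) ^ ((1/(2*p₀) + t₀/β)⁻¹ - 1)
        + (-((1/(2*p₀) + t₀/β)⁻¹)^2/β) * (θ t₀ x + ε) ^ ((1/(2*p₀) + t₀/β)⁻¹)
          * Real.log (θ t₀ x + ε)) ∂μT) t₀ := by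
  have hp₀0 : 0 < p₀ := by linarith
  set Q : ℝ → ℝ := fun t => 1/(2*p₀) + t/β with hQdef
  set P : ℝ → ℝ := fun t => (Q t)⁻¹ with hPdef
  set ρ : ℝ := β/(8*p₀) with hρdef
  have hρpos : 0 < ρ := by positivity
  have hQpos : ∀ t ∈ Set.Icc (t₀ - ρ) (t₀ + ρ), 0 < Q t := by
    intro t ht
    have h1 : -(β/(8*p₀)) ≤ t := by
      have h0 := ht.1; simp only [hρdef] at h0; linarith
    have h3 : -(β/(8*p₀))/β ≤ t/β := (div_le_div_iff_of_pos_right hβ).mpr h1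
    have h4 : -(β/(8*p₀))/β = -(1/(8*p₀)) := by field_simp
    have h5 : 1/(2*p₀) = 4*(1/(8*p₀)) := by field_simp; ring
    have hc8 : (0:ℝ) < 1/(8*p₀) := by positivity
    have : 0 < Q t := by
      simp only [hQdef]
      rw [h4] at h3
      linarith
    exact this
  have hbase_pos : ∀ (t : ℝ) (x : E2), 0 < θ t x + ε := fun t x => by
    have := hθnn t x; linarith
  have hbase_ne : ∀ (t : ℝ) (x : E2), θ t x + ε ≠ 0 := fun t x => (hbase_pos t x).ne'
  have hθc : Continuous (fun q : ℝ × E2 => θ q.1 q.2) := hθ.continuous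
  have hdθc : Continuous (fun q : ℝ × E2 => deriv (fun s => θ s q.2) q.1) :=
    continuous_joint_deriv_t hθ
  have hQcont : Continuous Q := by
    simp only [hQdef]
    exact continuous_const.add (continuous_id.div_const β)
  set S : Set (ℝ × E2) := Set.Icc (t₀ - ρ) (t₀ + ρ) ×ˢ B2 with hSdef
  have hScomp : IsCompact S := isCompact_Icc.prod isCompact_B2
  have hPcontOn : ContinuousOn P (Set.Icc (t₀ - ρ) (t₀ + ρ)) := by
    simp only [hPdef]
    exact hQcont.continuousOn.inv₀ fun t ht => (hQpos t ht).ne'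
  have c1 : ContinuousOn (fun q : ℝ × E2 => P q.1) S :=
    hPcontOn.comp continuous_fst.continuousOn fun q hq => hq.1
  have c2 : Continuous (fun q : ℝ × E2 => θ q.1 q.2 + ε) := hθc.add continuous_const
  have c2ne : ∀ q : ℝ × E2, θ q.1 q.2 + ε ≠ 0 := fun q => hbase_ne q.1 q.2
  have c3 : ContinuousOn (fun q : ℝ × E2 => (θ q.1 q.2 + ε) ^ (P q.1 - 1)) S :=
    c2.continuousOn.rpow (c1.sub continuousOn_const) fun q _ => Or.inl (c2ne q)
  have c4 : ContinuousOn (fun q : ℝ × E2 => (θ q.1 q.2 + ε) ^ (P q.1)) S :=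
    c2.continuousOn.rpow c1 fun q _ => Or.inl (c2ne q)
  have c5 : Continuous (fun q : ℝ × E2 => Real.log (θ q.1 q.2 + ε)) := c2.log c2ne
  have hGcontOn : ContinuousOn (fun q : ℝ × E2 =>
      deriv (fun s => θ s q.2) q.1 * P q.1 * (θ q.1 q.2 + ε) ^ (P q.1 - 1)
        + (-(P q.1)^2/β) * (θ q.1 q.2 + ε) ^ (P q.1) * Real.log (θ q.1 q.2 + ε)) S := by
    refine ContinuousOn.add ?_ ?_
    · exact (hdθc.continuousOn.mul c1).mul c3
    · exact ((((c1.pow 2).neg).div_const β).mul c4).mul c5.continuousOn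
  obtain ⟨C, hC⟩ := hScomp.exists_bound_of_continuousOn hGcontOn
  have hae : ∀ᵐ x ∂μT, x ∈ T2 := by
    unfold μT; exact self_mem_ae_restrict measurableSet_T2
  have hball_sub : ∀ t ∈ Metric.ball t₀ (ρ/2), t ∈ Set.Icc (t₀ - ρ) (t₀ + ρ) := by
    intro t ht
    rw [Metric.mem_ball, Real.dist_eq] at ht
    have := abs_lt.mp ht
    constructor <;> linarith [this.1, this.2]
  -- the parametric derivative lemma
  have key := hasDerivAt_integral_of_dominated_loc_of_deriv_le
    (F := fun t x => (θ t x + ε) ^ (P t))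
    (F' := fun t x =>
      deriv (fun s => θ s x) t * P t * (θ t x + ε) ^ (P t - 1)
        + (-(P t)^2/β) * (θ t x + ε) ^ (P t) * Real.log (θ t x + ε))
    (μ := μT) (x₀ := t₀) (bound := fun _ => C)
    (Metric.ball_mem_nhds t₀ (half_pos hρpos))
    (Filter.Eventually.of_forall fun t => by
      have : Continuous fun x => (θ t x + ε) ^ (P t) :=
        (((contDiff_slice hθ t).continuous).add continuous_const).rpow_const
          fun x => Or.inl (hbase_ne t x)
      exact this.aestronglyMeasurable)
    (integrable_muT_of_continuous
      ((((contDiff_slice hθ t₀).continuous).add continuous_const).rpow_const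
        fun x => Or.inl (hbase_ne t₀ x)))
    (by
      have hcont : Continuous fun x : E2 =>
          deriv (fun s => θ s x) t₀ * P t₀ * (θ t₀ x + ε) ^ (P t₀ - 1)
            + (-(P t₀)^2/β) * (θ t₀ x + ε) ^ (P t₀) * Real.log (θ t₀ x + ε) := by
        have d1 : Continuous fun x : E2 => deriv (fun s => θ s x) t₀ :=
          hdθc.comp (continuous_const.prodMk continuous_id)
        have d2 : Continuous fun x : E2 => θ t₀ x + ε :=
          ((contDiff_slice hθ t₀).continuous).add continuous_const
        have d3 : Continuous fun x : E2 => (θ t₀ x + ε) ^ (P t₀ - 1) :=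
          d2.rpow_const fun x => Or.inl (hbase_ne t₀ x)
        have d4 : Continuous fun x : E2 => (θ t₀ x + ε) ^ (P t₀) :=
          d2.rpow_const fun x => Or.inl (hbase_ne t₀ x)
        have d5 : Continuous fun x : E2 => Real.log (θ t₀ x + ε) :=
          d2.log fun x => hbase_ne t₀ x
        exact ((d1.mul continuous_const).mul d3).add
          ((continuous_const.mul d4).mul d5)
      exact hcont.aestronglyMeasurable)
    (by
      filter_upwards [hae] with x hx
      intro t ht
      exact hC (t, x) ⟨hball_sub t ht, T2_subset_B2 hx⟩)
    (MeasureTheory.integrable_const C)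
    (Filter.Eventually.of_forall fun x => by
      intro t ht
      have htI := hball_sub t ht
      have hQt : 0 < Q t := hQpos t htI
      have h0 := hasDerivAt_slice hθ t x
      have h1 : HasDerivAt (fun s => θ s x) (deriv (fun s => θ s x) t) t :=
        h0.differentiableAt.hasDerivAt
      have hQ' : HasDerivAt Q (1/β) t := by
        have hid : HasDerivAt (fun t : ℝ => t/β) (1/β) t := by
          simpa using (hasDerivAt_id t).div_const β
        exact hid.const_add (1/(2*p₀))
      have hP' : HasDerivAt P (-(P t)^2/β) t := by
        have h2 := hQ'.inv hQt.ne'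
        have heq : -(1/β) / (Q t)^2 = -(P t)^2/β := by
          simp only [hPdef]
          field_simp
        rw [heq] at h2
        exact h2
      exact (h1.add_const ε).rpow hP' (hbase_pos t x))
  exact key.2

end Chunk7



/-- **Lemma 2.3** of the paper: a nonnegative scalar `θ` transported (and diffused, `ν ≥ 0`)
and amplified by a divergence-free velocity `u` with exponentially integrable gradient,
`∂ₜθ + u·∇θ − νΔθ ≤ |∇u|θ + f`, satisfies
`sup_{t ∈ [0,t*]} ‖θ(t)‖_{L²} ≤ C₁‖θ(0)‖_{L^{2p₀}}^{p₀} + C₂` with `t* = β(p₀−1)/(2p₀)`,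
where `C₁, C₂` depend only on `p₀, β, C_K, F` (in particular they are uniform in `ν`). -/
theorem transport_short_time_H1_loss
    (β CK p₀ F : ℝ) (hβ : 0 < β) (hCK : 0 < CK) (hp₀ : 1 < p₀) (hF : 0 ≤ F) :
    ∃ C₁ C₂ : ℝ, 0 ≤ C₁ ∧ 0 ≤ C₂ ∧
      ∀ (ν : ℝ), 0 ≤ ν →
      ∀ (T : ℝ), β * (p₀ - 1) / (2 * p₀) ≤ T →
      ∀ (u : ℝ → E2 → E2),
        ContDiff ℝ (⊤ : ℕ∞) (fun q : ℝ × E2 => u q.1 q.2) →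
        (∀ t, PeriodicV (u t)) →
        (∀ t ∈ Set.Icc 0 T, ∀ x, divergence (u t) x = 0) →
        (∀ t ∈ Set.Icc 0 T,
          ∫⁻ x, ENNReal.ofReal (Real.exp (β * gradVNorm (u t) x)) ∂μT
            ≤ ENNReal.ofReal CK) →
      ∀ (f : ℝ → E2 → ℝ),
        Measurable (fun q : ℝ × E2 => f q.1 q.2) →
        (∀ t ∈ Set.Icc 0 T, ∀ x, |f t x| ≤ F) →
      ∀ (θ : ℝ → E2 → ℝ),
        ContDiff ℝ (⊤ : ℕ∞) (fun q : ℝ × E2 => θ q.1 q.2) →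
        (∀ t, Periodic2 (θ t)) →
        (∀ t x, 0 ≤ θ t x) →
        (∀ t ∈ Set.Icc 0 T, ∀ x : E2,
          deriv (fun s => θ s x) t + advect (u t) (θ t) x - ν * lap (θ t) x
            ≤ gradVNorm (u t) x * θ t x + f t x) →
        (⨆ t ∈ Set.Icc (0:ℝ) (β * (p₀ - 1) / (2 * p₀)), eLpNorm (θ t) 2 μT)
          ≤ ENNReal.ofReal
              (C₁ * ((eLpNorm (θ 0) (ENNReal.ofReal (2 * p₀)) μT).toReal) ^ p₀ + C₂) := by
  have hp₀0 : 0 < p₀ := by linarith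
  have hp₀1 : 0 < p₀ - 1 := by linarith
  set tstar : ℝ := β * (p₀ - 1) / (2 * p₀) with htstar
  have htstar_pos : 0 < tstar := by positivity
  set K : ℝ := CK / β with hK
  have hKpos : 0 < K := by positivity
  set A : ℝ := Real.exp (K * tstar) with hA
  have hApos : 0 < A := Real.exp_pos _
  refine ⟨A, A + (F/K) * A, hApos.le, by positivity, ?_⟩
  intro ν hν T hT u hu huper hdiv hexp f hfmeas hfbd θ hθ hθper hθnn hpde
  set N₀ : ℝ := (eLpNorm (θ 0) (ENNReal.ofReal (2 * p₀)) μT).toReal with hN₀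
  have hN₀nn : 0 ≤ N₀ := ENNReal.toReal_nonneg
  have hIccT : Set.Icc (0:ℝ) tstar ⊆ Set.Icc (0:ℝ) T :=
    Set.Icc_subset_Icc le_rfl hT
  have hθslice : ∀ s : ℝ, ContDiff ℝ (⊤:ℕ∞) (θ s) := fun s => contDiff_slice hθ s
  have huslice : ∀ s : ℝ, ContDiff ℝ (⊤:ℕ∞) (u s) := fun s =>
    hu.comp (contDiff_const.prodMk contDiff_id)
  have hdθc : ∀ s : ℝ, Continuous (fun x => deriv (fun r => θ r x) s) := fun s =>
    (continuous_joint_deriv_t hθ).comp (continuous_const.prodMk continuous_id)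
  -- ###### the ε-quantified main bound ######
  have main : ∀ ε : ℝ, 0 < ε → ∀ t ∈ Set.Icc (0:ℝ) tstar,
      eLpNorm (θ t) 2 μT ≤ ENNReal.ofReal (A * (N₀ + ε) + (F/K) * A) := by
    intro ε hε t ht
    have hbase_pos : ∀ (s : ℝ) (x : E2), 0 < θ s x + ε := fun s x => by
      have := hθnn s x; linarith
    set Q : ℝ → ℝ := fun s => 1/(2*p₀) + s/β with hQdef
    set P : ℝ → ℝ := fun s => (Q s)⁻¹ with hPdef
    set H : ℝ → ℝ := fun s => ∫ x, (θ s x + ε) ^ (P s) ∂μT with hH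
    set X : ℝ → ℝ := fun s => (H s) ^ (Q s) with hX
    -- ranges of Q and P on [0, tstar]
    have hQpos : ∀ s ∈ Set.Icc (0:ℝ) tstar, 0 < Q s := by
      intro s hs
      have h1 : 0 ≤ s/β := div_nonneg hs.1 hβ.le
      have h2 : (0:ℝ) < 1/(2*p₀) := by positivity
      simp only [hQdef]; linarith
    have hQlb : ∀ s ∈ Set.Icc (0:ℝ) tstar, 1/(2*p₀) ≤ Q s := by
      intro s hs
      have h1 : 0 ≤ s/β := div_nonneg hs.1 hβ.le
      simp only [hQdef]; linarith
    have hQub : ∀ s ∈ Set.Icc (0:ℝ) tstar, Q s ≤ 1/2 := by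
      intro s hs
      have h1 : s/β ≤ tstar/β := (div_le_div_iff_of_pos_right hβ).mpr hs.2
      have h2 : tstar/β = (p₀ - 1)/(2*p₀) := by
        rw [htstar]; field_simp
      have h3 : 1/(2*p₀) + (p₀-1)/(2*p₀) = 1/2 := by field_simp; ring
      simp only [hQdef]; rw [h2] at h1; linarith
    have hP2 : ∀ s ∈ Set.Icc (0:ℝ) tstar, 2 ≤ P s := by
      intro s hs
      have := one_div_le_one_div_of_le (hQpos s hs) (hQub s hs)
      simp only [hPdef, ← one_div]
      calc (2:ℝ) = 1/(1/2) := by norm_num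
        _ ≤ 1/(Q s) := this
    have hPub : ∀ s ∈ Set.Icc (0:ℝ) tstar, P s ≤ 2*p₀ := by
      intro s hs
      have h0 : (0:ℝ) < 1/(2*p₀) := by positivity
      have := one_div_le_one_div_of_le h0 (hQlb s hs)
      simp only [hPdef, ← one_div]
      calc 1/(Q s) ≤ 1/(1/(2*p₀)) := this
        _ = 2*p₀ := by rw [one_div_one_div]
    have hPpos : ∀ s ∈ Set.Icc (0:ℝ) tstar, 0 < P s := fun s hs => by
      have := hP2 s hs; linarith
    -- basic positivity of H
    have hbasec : ∀ s : ℝ, Continuous fun x => (θ s x + ε) ^ (P s) := fun s =>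
      ((hθslice s).continuous.add continuous_const).rpow_const
        fun x => Or.inl (hbase_pos s x).ne'
    have hHpos : ∀ s ∈ Set.Icc (0:ℝ) tstar, 0 < H s := by
      intro s hs
      have h1 : ∀ x, (ε : ℝ) ^ (P s) ≤ (θ s x + ε) ^ (P s) := fun x =>
        Real.rpow_le_rpow hε.le (by have := hθnn s x; linarith) (hPpos s hs).le
      have h2 : (ε : ℝ) ^ (P s) ≤ H s := by
        have := MeasureTheory.integral_mono (MeasureTheory.integrable_const _)
          (integrable_muT_of_continuous (hbasec s)) h1
        simpa [MeasureTheory.integral_const, MeasureTheory.measure_univ] using this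
      exact lt_of_lt_of_le (Real.rpow_pos_of_pos hε _) h2
    -- derivative of H
    set Draw : ℝ → ℝ := fun s => ∫ x,
      (deriv (fun r => θ r x) s * P s * (θ s x + ε) ^ (P s - 1)
        + (-(P s)^2/β) * (θ s x + ε) ^ (P s) * Real.log (θ s x + ε)) ∂μT with hDraw
    have hHder : ∀ s ∈ Set.Icc (0:ℝ) tstar, HasDerivAt H (Draw s) s := by
      intro s hs
      exact hasDerivAt_H hβ hp₀ hε hθ hθnn s hs.1
    have hQ' : ∀ s : ℝ, HasDerivAt Q (1/β) s := by
      intro s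
      have hid : HasDerivAt (fun r : ℝ => r/β) (1/β) s := by
        simpa using (hasDerivAt_id s).div_const β
      exact hid.const_add (1/(2*p₀))
    set DX : ℝ → ℝ := fun s =>
      Draw s * Q s * H s ^ (Q s - 1) + 1/β * H s ^ (Q s) * Real.log (H s) with hDX
    have hXder : ∀ s ∈ Set.Icc (0:ℝ) tstar, HasDerivAt X (DX s) s := by
      intro s hs
      exact (hHder s hs).rpow (hQ' s) (hHpos s hs)
    -- bound on Draw via entropy_step
    have hDrawle : ∀ s ∈ Set.Icc (0:ℝ) tstar,
        Draw s ≤ (P s/β) * CK * H s - (P s/β) * H s * Real.log (H s)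
          + P s * F * ((H s ^ (1/(P s))) ^ (P s - 1)) := by
      intro s hs
      have hsT : s ∈ Set.Icc (0:ℝ) T := hIccT hs
      have hexp_s : ∫ x, Real.exp (β * gradVNorm (u s) x) ∂μT ≤ CK :=
        integral_exp_le hCK.le
          (Real.continuous_exp.comp (continuous_const.mul
            (continuous_gradVNorm (huslice s))))
          (fun x => (Real.exp_pos _).le) (hexp s hsT)
      have hpde_s : ∀ x, deriv (fun r => θ r x) s
          ≤ ν * lap (θ s) x - advect (u s) (θ s) x + gradVNorm (u s) x * θ s x + F := by
        intro x
        have h1 := hpde s hsT x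
        have h2 : f s x ≤ F := le_trans (le_abs_self _) (hfbd s hsT x)
        linarith
      have hE := entropy_step hβ hCK hF hν hε (hP2 s hs)
        (huslice s) (huper s) (hdiv s hsT) hexp_s
        (hθslice s) (hθper s) (fun x => hθnn s x) (hdθc s) hpde_s
      have heq : Draw s = ∫ x,
          (P s * (θ s x + ε) ^ (P s - 1) * deriv (fun r => θ r x) s
            + (-(P s^2))/β * ((θ s x + ε) ^ (P s) * Real.log (θ s x + ε))) ∂μT := by
        rw [hDraw]
        exact MeasureTheory.integral_congr_ae
          (Filter.Eventually.of_forall fun x => by ring)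
      rw [heq]
      exact hE
    -- bound  DX ≤ K * X + F
    have hDXle : ∀ s ∈ Set.Icc (0:ℝ) tstar, DX s ≤ K * X s + F := by
      intro s hs
      have hqp : Q s * P s = 1 := by
        simp only [hPdef]
        exact (mul_inv_cancel₀ (hQpos s hs).ne')
      have hHt := hHpos s hs
      have hE1 : (0:ℝ) < H s ^ (Q s - 1) := Real.rpow_pos_of_pos hHt _
      have hQs := hQpos s hs
      have e1 : H s * H s ^ (Q s - 1) = H s ^ (Q s) := by
        nth_rewrite 1 [← Real.rpow_one (H s)]
        rw [← Real.rpow_add hHt]; ring_nf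
      have h1p : 1/(P s) = Q s := by
        simp only [hPdef]; rw [one_div, inv_inv]
      have e2 : ((H s ^ (1/(P s))) ^ (P s - 1)) * H s ^ (Q s - 1) = 1 := by
        rw [h1p, ← Real.rpow_mul hHt.le, ← Real.rpow_add hHt]
        have : Q s * (P s - 1) + (Q s - 1) = 0 := by
          have : Q s * (P s - 1) = Q s * P s - Q s := by ring
          rw [this, hqp]; ring
        rw [this, Real.rpow_zero]
      have hmul := mul_le_mul_of_nonneg_right (hDrawle s hs)
        (mul_nonneg hQs.le hE1.le)
      have eDX : DX s = Draw s * (Q s * H s ^ (Q s - 1))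
          + 1/β * H s ^ (Q s) * Real.log (H s) := by
        simp only [hDX]; ring
      have eB : ((P s/β) * CK * H s - (P s/β) * H s * Real.log (H s)
            + P s * F * ((H s ^ (1/(P s))) ^ (P s - 1))) * (Q s * H s ^ (Q s - 1))
          = (CK/β) * (H s * H s ^ (Q s - 1)) * (Q s * P s)
            - (1/β) * Real.log (H s) * (H s * H s ^ (Q s - 1)) * (Q s * P s)
            + F * (Q s * P s) * (((H s ^ (1/(P s))) ^ (P s - 1)) * H s ^ (Q s - 1)) := by
        ring
      rw [e1, e2, hqp] at eB
      have hXs : X s = H s ^ (Q s) := rfl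
      rw [eDX]
      rw [eB] at hmul
      simp only [mul_one] at hmul
      rw [hXs, hK]
      linarith
    -- initial value
    have hθ0c : Continuous (θ 0) := (hθslice 0).continuous
    have hθ0εc : Continuous (fun x => θ 0 x + ε) := hθ0c.add continuous_const
    have h2p₀pos : (0:ℝ) < 2*p₀ := by linarith
    have hQ0 : Q 0 = 1/(2*p₀) := by simp [hQdef]
    have hP0 : P 0 = 2*p₀ := by
      simp only [hPdef, hQ0]; rw [one_div, inv_inv]
    have hX0eq : ENNReal.ofReal (X 0)
        = eLpNorm (fun x => θ 0 x + ε) (ENNReal.ofReal (2*p₀)) μT := by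
      rw [eLpNorm_eq_integral_rpow hθ0εc (fun x => (hbase_pos 0 x).le) h2p₀pos]
      congr 1
      simp only [hX, hH, hP0, hQ0]
    have hθ0eLp : eLpNorm (θ 0) (ENNReal.ofReal (2*p₀)) μT ≠ ⊤ := by
      rw [eLpNorm_eq_integral_rpow hθ0c (fun x => hθnn 0 x) h2p₀pos]
      exact ENNReal.ofReal_ne_top
    have hconst : eLpNorm (fun _ : E2 => ε) (ENNReal.ofReal (2*p₀)) μT
        = ENNReal.ofReal ε := by
      rw [eLpNorm_eq_integral_rpow continuous_const (fun _ => hε.le) h2p₀pos]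
      congr 1
      rw [MeasureTheory.integral_const]
      simp only [MeasureTheory.measure_univ, probReal_univ, ENNReal.toReal_one, one_smul, smul_eq_mul,
        one_mul]
      rw [← Real.rpow_mul hε.le, mul_one_div, div_self h2p₀pos.ne', Real.rpow_one]
    have hX0le : X 0 ≤ N₀ + ε := by
      have htri : eLpNorm (fun x => θ 0 x + ε) (ENNReal.ofReal (2*p₀)) μT
          ≤ eLpNorm (θ 0) (ENNReal.ofReal (2*p₀)) μT
            + eLpNorm (fun _ : E2 => ε) (ENNReal.ofReal (2*p₀)) μT := by
        have heq : (fun x => θ 0 x + ε) = (θ 0) + (fun _ : E2 => ε) := rfl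
        rw [heq]
        exact MeasureTheory.eLpNorm_add_le hθ0c.aestronglyMeasurable
          aestronglyMeasurable_const (ENNReal.one_le_ofReal.mpr (by linarith))
      rw [← hX0eq, hconst] at htri
      have hN0eq : eLpNorm (θ 0) (ENNReal.ofReal (2*p₀)) μT = ENNReal.ofReal N₀ := by
        rw [hN₀, ENNReal.ofReal_toReal hθ0eLp]
      rw [hN0eq, ← ENNReal.ofReal_add hN₀nn hε.le] at htri
      exact (ENNReal.ofReal_le_ofReal_iff (by positivity)).mp htri
    -- Grönwall
    have hXcont : ContinuousOn X (Set.Icc 0 tstar) := fun s hs =>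
      (hXder s hs).continuousAt.continuousWithinAt
    have hgron := le_gronwallBound_of_liminf_deriv_right_le (f := X) (f' := DX)
      (δ := N₀ + ε) (K := K) (ε := F) (a := 0) (b := tstar)
      hXcont
      (fun s hs r hr =>
        ((hXder s (Set.Ico_subset_Icc_self hs)).hasDerivWithinAt).liminf_right_slope_le hr)
      hX0le
      (fun s hs => hDXle s (Set.Ico_subset_Icc_self hs))
    have hXt := hgron t ht
    have hXbound : X t ≤ A * (N₀ + ε) + (F/K) * A := by
      rw [gronwallBound_of_K_ne_0 hKpos.ne'] at hXt
      have hexp1 : Real.exp (K * (t - 0)) ≤ A := by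
        rw [hA]
        exact Real.exp_le_exp.mpr (by
          have := ht.2
          have := ht.1
          nlinarith)
      have hδnn : 0 ≤ N₀ + ε := by positivity
      have hFK : 0 ≤ F/K := by positivity
      have h1 : (N₀ + ε) * Real.exp (K * (t - 0)) ≤ (N₀ + ε) * A :=
        mul_le_mul_of_nonneg_left hexp1 hδnn
      have h2 : F/K * (Real.exp (K * (t - 0)) - 1) ≤ F/K * A := by
        apply mul_le_mul_of_nonneg_left _ hFK
        have := Real.exp_pos (K * (t - 0))
        linarith
      calc X t ≤ (N₀ + ε) * Real.exp (K * (t - 0))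
            + F/K * (Real.exp (K * (t - 0)) - 1) := hXt
        _ ≤ (N₀ + ε) * A + F/K * A := by linarith
        _ = A * (N₀ + ε) + (F/K) * A := by ring
    -- from X to the L² norm
    have hθtc : Continuous (θ t) := (hθslice t).continuous
    have hθtεc : Continuous (fun x => θ t x + ε) := hθtc.add continuous_const
    have step1 : eLpNorm (θ t) 2 μT ≤ eLpNorm (fun x => θ t x + ε) 2 μT := by
      apply MeasureTheory.eLpNorm_mono
      intro x
      rw [Real.norm_eq_abs, Real.norm_eq_abs, abs_of_nonneg (hθnn t x),
        abs_of_nonneg (hbase_pos t x).le]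
      linarith
    have step2 : eLpNorm (fun x => θ t x + ε) 2 μT
        ≤ eLpNorm (fun x => θ t x + ε) (ENNReal.ofReal (P t)) μT := by
      have h2 : (2 : ℝ≥0∞) = ENNReal.ofReal 2 := by norm_num
      have h3 := MeasureTheory.eLpNorm_le_eLpNorm_of_exponent_le (μ := μT)
        (ENNReal.ofReal_le_ofReal (hP2 t ht)) hθtεc.aestronglyMeasurable
      rwa [← h2] at h3
    have step3 : eLpNorm (fun x => θ t x + ε) (ENNReal.ofReal (P t)) μT
        = ENNReal.ofReal (X t) := by
      rw [eLpNorm_eq_integral_rpow hθtεc (fun x => (hbase_pos t x).le) (hPpos t ht)]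
      congr 1
      have h1p : 1/(P t) = Q t := by
        simp only [hPdef]; rw [one_div, inv_inv]
      rw [h1p]
    calc eLpNorm (θ t) 2 μT ≤ eLpNorm (fun x => θ t x + ε) 2 μT := step1
      _ ≤ eLpNorm (fun x => θ t x + ε) (ENNReal.ofReal (P t)) μT := step2
      _ = ENNReal.ofReal (X t) := step3
      _ ≤ ENNReal.ofReal (A * (N₀ + ε) + (F/K) * A) :=
          ENNReal.ofReal_le_ofReal hXbound
  -- ###### pass to the limit ε → 0⁺ and conclude ######
  refine iSup₂_le fun t ht => ?_
  have hlim : eLpNorm (θ t) 2 μT ≤ ENNReal.ofReal (A * N₀ + (F/K) * A) := by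
    have T1 : Filter.Tendsto (fun ε : ℝ => ENNReal.ofReal (A * (N₀ + ε) + (F/K) * A))
        (nhdsWithin 0 (Set.Ioi 0)) (nhds (ENNReal.ofReal (A * N₀ + (F/K) * A))) := by
      have hc : Continuous (fun ε : ℝ => A * (N₀ + ε) + (F/K) * A) := by fun_prop
      have h0 := (ENNReal.continuous_ofReal.comp hc).tendsto 0
      have h2 := h0.mono_left (nhdsWithin_le_nhds (s := Set.Ioi (0:ℝ)))
      simpa [Function.comp_def] using h2
    have T2 : ∀ᶠ ε in nhdsWithin (0:ℝ) (Set.Ioi 0),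
        eLpNorm (θ t) 2 μT ≤ ENNReal.ofReal (A * (N₀ + ε) + (F/K) * A) :=
      eventually_nhdsWithin_of_forall fun ε hε => main ε hε t ht
    exact ge_of_tendsto T1 T2
  refine hlim.trans (ENNReal.ofReal_le_ofReal ?_)
  have hNle : N₀ ≤ N₀ ^ p₀ + 1 := by
    by_cases hN1 : N₀ ≤ 1
    · have : (0:ℝ) ≤ N₀ ^ p₀ := Real.rpow_nonneg hN₀nn p₀
      linarith
    · push_neg at hN1
      have h1 : N₀ ^ (1:ℝ) ≤ N₀ ^ p₀ :=
        Real.rpow_le_rpow_of_exponent_le hN1.le (by linarith)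
      rw [Real.rpow_one] at h1
      linarith
  have h2 : A * N₀ ≤ A * (N₀ ^ p₀ + 1) := mul_le_mul_of_nonneg_left hNle hApos.le
  linarith

end
end

section
/- Let ν̃ ≥ 0 and let (δ_n)_{n≥0} be a sequence of nonnegative real numbers satisfying δ_n ≤ √(δ_{n−1}) + ν̃ for every n ≥ 1. Then for every n ≥ 1, δ_n ≤ δ₀^{2^{−n}} + ∑_{i=0}^{n−1} ν̃^{2^{−i}}. -/
lemma sqrt_add_le' (a b : ℝ) (ha : 0 ≤ a) (hb : 0 ≤ b) :
    Real.sqrt (a + b) ≤ Real.sqrt a + Real.sqrt b := by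
  rw [show a + b = Real.sqrt a ^ 2 + Real.sqrt b ^ 2 by
    rw [Real.sq_sqrt ha, Real.sq_sqrt hb]]
  have h1 := Real.sqrt_nonneg a
  have h2 := Real.sqrt_nonneg b
  rw [show Real.sqrt a + Real.sqrt b =
      Real.sqrt ((Real.sqrt a + Real.sqrt b) ^ 2) by
    rw [Real.sqrt_sq (by positivity)]]
  apply Real.sqrt_le_sqrt
  nlinarith

lemma sqrt_sum_le {ι : Type*} (s : Finset ι) (f : ι → ℝ) (hf : ∀ i ∈ s, 0 ≤ f i) :
    Real.sqrt (∑ i ∈ s, f i) ≤ ∑ i ∈ s, Real.sqrt (f i) := by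
  induction s using Finset.cons_induction with
  | empty => simp
  | cons a s ha ih =>
    rw [Finset.sum_cons, Finset.sum_cons]
    calc Real.sqrt (f a + ∑ i ∈ s, f i)
        ≤ Real.sqrt (f a) + Real.sqrt (∑ i ∈ s, f i) :=
          sqrt_add_le' _ _ (hf a (Finset.mem_cons_self a s))
            (Finset.sum_nonneg fun i hi => hf i (Finset.mem_cons_of_mem hi))
      _ ≤ _ := by
          gcongr
          exact ih fun i hi => hf i (Finset.mem_cons_of_mem hi)

lemma sqrt_rpow_half (x : ℝ) (hx : 0 ≤ x) (p : ℝ) :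
    Real.sqrt (x ^ p) = x ^ (p / 2) := by
  rw [Real.sqrt_eq_rpow, ← Real.rpow_mul hx]
  ring_nf

/-- The iteration bound (2.49)–(2.51) in Step 2 of Lemma 2.5 of the paper: if
`δ_n ≤ √(δ_{n−1}) + ν̃` for all `n ≥ 1`, then
`δ_n ≤ δ₀^{2^{−n}} + ∑_{i=0}^{n−1} ν̃^{2^{−i}}` for all `n ≥ 1`. -/
theorem iterate_sqrt_bound (ν : ℝ) (hν : 0 ≤ ν) (δ : ℕ → ℝ) (hδ : ∀ n, 0 ≤ δ n)
    (h : ∀ n : ℕ, 1 ≤ n → δ n ≤ Real.sqrt (δ (n - 1)) + ν) :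
    ∀ n : ℕ, 1 ≤ n →
      δ n ≤ δ 0 ^ ((2:ℝ) ^ (-(n:ℝ))) + ∑ i ∈ Finset.range n, ν ^ ((2:ℝ) ^ (-(i:ℝ))) := by
  have key : ∀ (k : ℕ), (2:ℝ) ^ (-(k:ℝ)) / 2 = (2:ℝ) ^ (-((k:ℝ)+1)) := by
    intro k
    rw [neg_add, Real.rpow_add two_pos, Real.rpow_neg_one]
    ring
  intro n hn
  induction n with
  | zero => omega
  | succ m ih =>
    rcases Nat.eq_zero_or_pos m with hm | hm
    · subst hm
      have := h 1 le_rfl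
      simp only [Nat.sub_self] at this
      calc δ 1 ≤ Real.sqrt (δ 0) + ν := this
        _ = δ 0 ^ ((2:ℝ) ^ (-(1:ℕ):ℝ)) + ∑ i ∈ Finset.range 1, ν ^ ((2:ℝ) ^ (-(i:ℝ))) := by
            rw [Finset.sum_range_one]
            norm_num [Real.sqrt_eq_rpow]
    · have hrec := h (m + 1) (by omega)
      simp only [Nat.add_sub_cancel] at hrec
      have ihm := ih hm
      have hsum : 0 ≤ ∑ i ∈ Finset.range m, ν ^ ((2:ℝ) ^ (-(i:ℝ))) :=
        Finset.sum_nonneg fun i _ => Real.rpow_nonneg hν _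
      calc δ (m + 1) ≤ Real.sqrt (δ m) + ν := hrec
        _ ≤ Real.sqrt (δ 0 ^ ((2:ℝ) ^ (-(m:ℝ))) + ∑ i ∈ Finset.range m, ν ^ ((2:ℝ) ^ (-(i:ℝ)))) + ν := by
            gcongr
        _ ≤ Real.sqrt (δ 0 ^ ((2:ℝ) ^ (-(m:ℝ)))) +
              (∑ i ∈ Finset.range m, Real.sqrt (ν ^ ((2:ℝ) ^ (-(i:ℝ))))) + ν := by
            gcongr
            calc Real.sqrt (δ 0 ^ ((2:ℝ) ^ (-(m:ℝ))) + ∑ i ∈ Finset.range m, ν ^ ((2:ℝ) ^ (-(i:ℝ))))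
                ≤ Real.sqrt (δ 0 ^ ((2:ℝ) ^ (-(m:ℝ)))) +
                  Real.sqrt (∑ i ∈ Finset.range m, ν ^ ((2:ℝ) ^ (-(i:ℝ)))) :=
                  sqrt_add_le' _ _ (Real.rpow_nonneg (hδ 0) _) hsum
              _ ≤ _ := by
                  gcongr
                  exact sqrt_sum_le _ _ fun i _ => Real.rpow_nonneg hν _
        _ = δ 0 ^ ((2:ℝ) ^ (-((m:ℝ)+1))) + ∑ i ∈ Finset.range (m+1), ν ^ ((2:ℝ) ^ (-(i:ℝ))) := by
            rw [sqrt_rpow_half _ (hδ 0), key m, Finset.sum_range_succ']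
            have : ∀ i ∈ Finset.range m,
                Real.sqrt (ν ^ ((2:ℝ) ^ (-(i:ℝ)))) = ν ^ ((2:ℝ) ^ (-((i:ℝ)+1))) := by
              intro i _
              rw [sqrt_rpow_half _ hν, key i]
            rw [Finset.sum_congr rfl this]
            push_cast
            norm_num
            ring
        _ = _ := by push_cast; ring_nf
end

section
/- Let β > 0, C > 0, A > 0, T > 0, and let ρ : [0,T] → ℝ be differentiable with 0 < ρ(t) and ρ(t)² ≤ A for all t ∈ [0,T], satisfying the differential inequality ρ'(t) ≤ (C/β) ρ(t) log(A/ρ(t)²) for all t ∈ [0,T]. Then for all t ∈ [0,T], ρ(t) ≤ A^{(1 − e^{−2Ct/β})/2} · ρ(0)^{e^{−2Ct/β}}. -/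
/-- The Osgood-type comparison lemma behind the trajectory-separation estimate (2.33)
in Proposition 2.7 of the paper: if `0 < ρ(t)`, `ρ(t)² ≤ A` and
`ρ'(t) ≤ (C/β) ρ(t) log(A/ρ(t)²)` on `[0,T]`, then
`ρ(t) ≤ A^{(1−e^{−2Ct/β})/2} ρ(0)^{e^{−2Ct/β}}`. -/
theorem osgood_log_comparison
    (β C A T : ℝ) (hβ : 0 < β) (hC : 0 < C) (hA : 0 < A) (hT : 0 < T)
    (ρ ρ' : ℝ → ℝ)
    (hderiv : ∀ t ∈ Set.Icc 0 T, HasDerivAt ρ (ρ' t) t)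
    (hpos : ∀ t ∈ Set.Icc 0 T, 0 < ρ t)
    (hbd : ∀ t ∈ Set.Icc 0 T, ρ t ^ 2 ≤ A)
    (hode : ∀ t ∈ Set.Icc 0 T, ρ' t ≤ (C / β) * ρ t * Real.log (A / ρ t ^ 2)) :
    ∀ t ∈ Set.Icc 0 T,
      ρ t ≤ A ^ ((1 - Real.exp (-(2 * C * t / β))) / 2)
              * ρ 0 ^ (Real.exp (-(2 * C * t / β))) := by
  intro t ht
  set lam : ℝ := 2 * C / β with hlam
  have hlampos : 0 < lam := by positivity
  -- key: log (A / ρ s ^ 2) = log A - 2 * log (ρ s)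
  have hu : ∀ s ∈ Set.Icc 0 T, Real.log (A / ρ s ^ 2) = Real.log A - 2 * Real.log (ρ s) := by
    intro s hs
    rw [Real.log_div hA.ne' (pow_ne_zero _ (hpos s hs).ne'), Real.log_pow]
    push_cast; ring
  set v : ℝ → ℝ := fun s => (Real.log A - 2 * Real.log (ρ s)) * Real.exp (lam * s) with hv
  have hvderiv : ∀ s ∈ Set.Icc 0 T, HasDerivAt v
      ((-2 * (ρ' s / ρ s)) * Real.exp (lam * s)
        + (Real.log A - 2 * Real.log (ρ s)) * (lam * Real.exp (lam * s))) s := by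
    intro s hs
    have h1 : HasDerivAt (fun x => Real.log (ρ x)) (ρ' s / ρ s) s :=
      (hderiv s hs).log (hpos s hs).ne'
    have h2 : HasDerivAt (fun x => Real.exp (lam * x)) (lam * Real.exp (lam * s)) s := by
      have := (Real.hasDerivAt_exp (lam * s)).comp s ((hasDerivAt_id s).const_mul lam)
      simpa [Function.comp_def, mul_comm (Real.exp (lam * s))] using this
    have h3 : HasDerivAt (fun x => Real.log A - 2 * Real.log (ρ x)) (-2 * (ρ' s / ρ s)) s := by
      have := (h1.const_mul (2:ℝ)).const_sub (Real.log A)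
      simpa [neg_mul] using this
    exact h3.mul h2
  have hmono : MonotoneOn v (Set.Icc 0 T) := by
    apply monotoneOn_of_deriv_nonneg (convex_Icc 0 T)
    · exact fun s hs => ((hvderiv s hs).continuousAt).continuousWithinAt
    · intro s hs
      rw [interior_Icc] at hs
      exact ((hvderiv s (Set.mem_Icc_of_Ioo hs)).differentiableAt).differentiableWithinAt
    · intro s hs
      rw [interior_Icc] at hs
      have hs' : s ∈ Set.Icc 0 T := Set.mem_Icc_of_Ioo hs
      rw [(hvderiv s hs').deriv]
      have hρ := hpos s hs'
      have hode' := hode s hs'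
      rw [hu s hs'] at hode'
      have hdiv : ρ' s / ρ s ≤ (C / β) * (Real.log A - 2 * Real.log (ρ s)) := by
        rw [div_le_iff₀ hρ]
        calc ρ' s ≤ (C / β) * ρ s * (Real.log A - 2 * Real.log (ρ s)) := hode'
          _ = (C / β) * (Real.log A - 2 * Real.log (ρ s)) * ρ s := by ring
      have hexp : 0 < Real.exp (lam * s) := Real.exp_pos _
      have : -2 * (ρ' s / ρ s) + (Real.log A - 2 * Real.log (ρ s)) * lam ≥ 0 := by
        have hlam2 : lam = 2 * (C / β) := by rw [hlam]; ring
        rw [hlam2]; nlinarith [hdiv]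
      nlinarith [this, hexp]
  have h0 : (0:ℝ) ∈ Set.Icc 0 T := Set.mem_Icc.mpr ⟨le_rfl, hT.le⟩
  have hv0 : v 0 ≤ v t := hmono h0 ht ht.1
  have hv0' : v 0 = Real.log A - 2 * Real.log (ρ 0) := by simp [hv]
  set E : ℝ := Real.exp (-(2 * C * t / β)) with hE
  have hEeq : E = Real.exp (-(lam * t)) := by rw [hE, hlam]; ring_nf
  have hEpos : 0 < E := Real.exp_pos _
  have hEmul : E * Real.exp (lam * t) = 1 := by
    rw [hEeq, ← Real.exp_add]; simp
  -- from v 0 ≤ v t, multiply by E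
  have hkey : (Real.log A - 2 * Real.log (ρ 0)) * E ≤ Real.log A - 2 * Real.log (ρ t) := by
    have := mul_le_mul_of_nonneg_right hv0 hEpos.le
    rw [hv0'] at this
    calc (Real.log A - 2 * Real.log (ρ 0)) * E ≤ v t * E := this
      _ = (Real.log A - 2 * Real.log (ρ t)) * (Real.exp (lam * t) * E) := by rw [hv]; ring
      _ = Real.log A - 2 * Real.log (ρ t) := by rw [mul_comm (Real.exp (lam * t)) E, hEmul, mul_one]
  -- conclude
  have hρt := hpos t ht
  have hρ0 := hpos 0 h0
  have hlog : Real.log (ρ t) ≤ ((1 - E) / 2) * Real.log A + E * Real.log (ρ 0) := by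
    nlinarith [hkey]
  calc ρ t = Real.exp (Real.log (ρ t)) := (Real.exp_log hρt).symm
    _ ≤ Real.exp (((1 - E) / 2) * Real.log A + E * Real.log (ρ 0)) := Real.exp_le_exp.mpr hlog
    _ = A ^ ((1 - E) / 2) * ρ 0 ^ E := by
        rw [Real.exp_add, Real.rpow_def_of_pos hA, Real.rpow_def_of_pos hρ0,
          mul_comm (Real.log A), mul_comm (Real.log (ρ 0))]
end

section
/- Let β > 0, C > 0, A > 0, T > 0, and let u : ℝ² × [0,T] → ℝ² be continuous and satisfy the log-Lipschitz bound |u(x,t) − u(y,t)| ≤ (C/β) |x − y| log(A/|x − y|²) for all t ∈ [0,T] and all x, y ∈ ℝ² with 0 < |x − y|² ≤ A. Let x, y : [0,T] → ℝ² be C¹ curves with x'(t) = u(x(t), t) and y'(t) = u(y(t), t) for all t, and suppose |x(t) − y(t)|² ≤ A for all t ∈ [0,T]. Then for all t ∈ [0,T], |x(t) − y(t)| ≤ A^{(1 − e^{−2Ct/β})/2} · |x(0) − y(0)|^{e^{−2Ct/β}}. -/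
open Filter Real
open scoped Topology

/-- The key barrier comparison: if `w` is continuous with derivative `w'` satisfying the
log-Gronwall inequality, then `w` stays below the explicit supersolution. -/
theorem logLip_barrier (A T lam : ℝ) (hA : 0 < A) (hlam : 0 < lam)
    (w w' : ℝ → ℝ) (hwc : Continuous w)
    (hwd : ∀ s, HasDerivAt w (w' s) s)
    (hwpos : ∀ s ∈ Set.Icc (0:ℝ) T, 0 < w s → w s < A →
      w' s ≤ lam * w s * Real.log (A / w s))
    (μ k : ℝ) (hμ : lam < μ) (hk0 : w 0 < k) (hkA : k < A) (hk_pos : 0 < k) :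
    ∀ s ∈ Set.Icc (0:ℝ) T,
      w s ≤ Real.exp (Real.log A + (Real.log k - Real.log A) * Real.exp (-μ * s)) := by
  set B : ℝ → ℝ :=
    fun s => Real.exp (Real.log A + (Real.log k - Real.log A) * Real.exp (-μ * s)) with hB_def
  set B' : ℝ → ℝ :=
    fun s => B s * ((Real.log k - Real.log A) * (Real.exp (-μ * s) * (-μ))) with hB'_def
  have hB_deriv : ∀ s, HasDerivAt B (B' s) s := by
    intro s
    have h1 : HasDerivAt (fun r : ℝ => -μ * r) (-μ) s := by
      simpa using (hasDerivAt_id s).const_mul (-μ)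
    have h2 := h1.exp
    have h3 := (h2.const_mul (Real.log k - Real.log A)).const_add (Real.log A)
    have h4 := h3.exp
    convert h4 using 1
  intro s hs
  refine image_le_of_deriv_right_lt_deriv_boundary hwc.continuousOn
    (fun r _ => (hwd r).hasDerivWithinAt) ?_ hB_deriv ?_ hs
  · have : B 0 = k := by
      simp only [hB_def, mul_zero, neg_zero, Real.exp_zero, mul_one]
      rw [show Real.log A + (Real.log k - Real.log A) = Real.log k by ring, Real.exp_log hk_pos]
    rw [this]; exact hk0.le
  · intro r hr hcontact
    have hBpos : 0 < B r := Real.exp_pos _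
    have hBltA : B r < A := by
      have hneg : (Real.log k - Real.log A) * Real.exp (-μ * r) < 0 :=
        mul_neg_of_neg_of_pos (sub_neg.mpr (Real.log_lt_log hk_pos hkA)) (Real.exp_pos _)
      calc B r < Real.exp (Real.log A) := Real.exp_lt_exp.mpr (by linarith)
        _ = A := Real.exp_log hA
    have hwr_pos : 0 < w r := hcontact ▸ hBpos
    have hwr_ltA : w r < A := hcontact ▸ hBltA
    have hlog_pos : 0 < Real.log (A / w r) :=
      Real.log_pos ((one_lt_div hwr_pos).mpr hwr_ltA)
    have h1 : w' r ≤ lam * w r * Real.log (A / w r) :=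
      hwpos r (Set.Ico_subset_Icc_self hr) hwr_pos hwr_ltA
    have h2 : lam * w r * Real.log (A / w r) < μ * w r * Real.log (A / w r) :=
      mul_lt_mul_of_pos_right (mul_lt_mul_of_pos_right hμ hwr_pos) hlog_pos
    have h3 : μ * w r * Real.log (A / w r) = B' r := by
      have hlogAw : Real.log (A / w r) = (Real.log A - Real.log k) * Real.exp (-μ * r) := by
        rw [Real.log_div hA.ne' hwr_pos.ne', hcontact]
        simp only [hB_def, Real.log_exp]
        ring
      rw [hlogAw, hcontact]
      simp only [hB'_def]
      ring
    linarith

/-- The deterministic flow-separation estimate (2.33) of Proposition 2.7 of the paper: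
two trajectories of a log-Lipschitz velocity field `u` on `ℝ²` whose squared separation
stays below `A` satisfy
`|x(t) − y(t)| ≤ A^{(1−e^{−2Ct/β})/2} |x(0) − y(0)|^{e^{−2Ct/β}}` on `[0,T]`. -/
theorem logLipschitz_flow_separation
    (β C A T : ℝ) (hβ : 0 < β) (hC : 0 < C) (hA : 0 < A) (hT : 0 < T)
    (u : EuclideanSpace ℝ (Fin 2) → ℝ → EuclideanSpace ℝ (Fin 2))
    (hu_cont : Continuous (fun q : EuclideanSpace ℝ (Fin 2) × ℝ => u q.1 q.2))
    (hu_loglip : ∀ t ∈ Set.Icc 0 T, ∀ x y : EuclideanSpace ℝ (Fin 2),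
      0 < ‖x - y‖ ^ 2 → ‖x - y‖ ^ 2 ≤ A →
      ‖u x t - u y t‖ ≤ (C / β) * ‖x - y‖ * Real.log (A / ‖x - y‖ ^ 2))
    (x y : ℝ → EuclideanSpace ℝ (Fin 2))
    (hx : ∀ t, HasDerivAt x (u (x t) t) t)
    (hy : ∀ t, HasDerivAt y (u (y t) t) t)
    (hsep : ∀ t ∈ Set.Icc 0 T, ‖x t - y t‖ ^ 2 ≤ A) :
    ∀ t ∈ Set.Icc 0 T,
      ‖x t - y t‖ ≤ A ^ ((1 - Real.exp (-(2 * C * t / β))) / 2)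
            * ‖x 0 - y 0‖ ^ (Real.exp (-(2 * C * t / β))) := by
  intro t ht
  have hlam : 0 < 2 * C / β := by positivity
  set lam : ℝ := 2 * C / β with hlam_def
  set w : ℝ → ℝ := fun s => ‖x s - y s‖ ^ 2 with hw_def
  have hv : ∀ s, HasDerivAt (fun r => x r - y r) (u (x s) s - u (y s) s) s :=
    fun s => (hx s).sub (hy s)
  set w' : ℝ → ℝ := fun s => 2 * (inner ℝ (x s - y s) (u (x s) s - u (y s) s) : ℝ) with hw'_def
  have hwd : ∀ s, HasDerivAt w (w' s) s := by
    intro s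
    have h1 := (hv s).inner ℝ (hv s)
    have h2 : (fun r => (inner ℝ (x r - y r) (x r - y r) : ℝ)) = w := by
      funext r; exact real_inner_self_eq_norm_sq _
    rw [h2] at h1
    refine h1.congr_deriv ?_
    rw [real_inner_comm (x s - y s) (u (x s) s - u (y s) s)]
    simp only [hw'_def]
    ring
  have hwc : Continuous w := by
    have hxc : Continuous x := continuous_iff_continuousAt.mpr fun s => (hx s).continuousAt
    have hyc : Continuous y := continuous_iff_continuousAt.mpr fun s => (hy s).continuousAt
    exact ((hxc.sub hyc).norm.pow 2)
  have hwpos : ∀ s ∈ Set.Icc (0:ℝ) T, 0 < w s → w s < A →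
      w' s ≤ lam * w s * Real.log (A / w s) := by
    intro s hs hws hwsA
    have hnorm_nonneg : (0:ℝ) ≤ ‖x s - y s‖ := norm_nonneg _
    have hlip := hu_loglip s hs (x s) (y s) hws hwsA.le
    have hlog_nonneg : 0 ≤ Real.log (A / w s) :=
      Real.log_nonneg ((one_le_div hws).mpr hwsA.le)
    have hcs : (inner ℝ (x s - y s) (u (x s) s - u (y s) s) : ℝ)
        ≤ ‖x s - y s‖ * ‖u (x s) s - u (y s) s‖ := real_inner_le_norm _ _
    have h2 : ‖x s - y s‖ * ‖u (x s) s - u (y s) s‖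
        ≤ ‖x s - y s‖ * ((C / β) * ‖x s - y s‖ * Real.log (A / ‖x s - y s‖ ^ 2)) :=
      mul_le_mul_of_nonneg_left hlip hnorm_nonneg
    have h3 : (2:ℝ) * (‖x s - y s‖ * ((C / β) * ‖x s - y s‖ * Real.log (A / ‖x s - y s‖ ^ 2)))
        = lam * w s * Real.log (A / w s) := by
      simp only [hw_def, hlam_def]
      ring
    simp only [hw'_def]
    nlinarith [hcs, h2]
  have h0T : (0:ℝ) ∈ Set.Icc (0:ℝ) T := ⟨le_refl 0, hT.le⟩
  have hw0_nonneg : 0 ≤ w 0 := sq_nonneg _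
  have hw0A : w 0 ≤ A := hsep 0 h0T
  have hwtA : w t ≤ A := hsep t ht
  set E : ℝ := Real.exp (-(2 * C * t / β)) with hE_def
  have hEeq : E = Real.exp (-(lam * t)) := by
    rw [hE_def, hlam_def]; ring_nf
  have hE_pos : 0 < E := Real.exp_pos _
  have hsq : ∀ a b : ℝ, 0 ≤ a → 0 ≤ b → a ^ 2 ≤ b ^ 2 → a ≤ b := by
    intro a b ha hb h
    exact (pow_le_pow_iff_left₀ ha hb two_ne_zero).mp h
  rcases eq_or_lt_of_le hw0A with hw0eq | hw0lt
  · -- w 0 = A : both sides reduce to √A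
    have hn0 : ‖x 0 - y 0‖ = A ^ ((1:ℝ)/2) := by
      have h2 : ‖x 0 - y 0‖ ^ (2:ℕ) = A := hw0eq
      rw [← h2, ← Real.rpow_natCast ‖x 0 - y 0‖ 2, ← Real.rpow_mul (norm_nonneg _)]
      norm_num
    have hRHS : A ^ ((1 - E) / 2) * (A ^ ((1:ℝ)/2)) ^ E = A ^ ((1:ℝ)/2) := by
      rw [← Real.rpow_mul hA.le, ← Real.rpow_add hA]
      ring_nf
    rw [hn0, hRHS]
    apply hsq _ _ (norm_nonneg _) (Real.rpow_nonneg hA.le _)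
    have hhalf : (A ^ ((1:ℝ)/2)) ^ (2:ℕ) = A := by
      rw [← Real.rpow_natCast (A ^ ((1:ℝ)/2)) 2, ← Real.rpow_mul hA.le]
      norm_num
    rw [hhalf]; exact hwtA
  · -- w 0 < A
    set δ : ℝ := (A - w 0) / 2 with hδ_def
    have hδ : 0 < δ := by simp only [hδ_def]; linarith
    set μn : ℕ → ℝ := fun n => lam + 1 / (n + 1) with hμn_def
    set kn : ℕ → ℝ := fun n => w 0 + δ * (1 / (n + 1)) with hkn_def
    set En : ℕ → ℝ := fun n => Real.exp (-μn n * t) with hEn_def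
    set a : ℕ → ℝ := fun n => A ^ ((1 - En n) / 2) * kn n ^ (En n / 2) with ha_def
    have hfrac : ∀ n : ℕ, 0 < 1 / ((n:ℝ) + 1) := by intro n; positivity
    have hfrac1 : ∀ n : ℕ, 1 / ((n:ℝ) + 1) ≤ 1 := by
      intro n
      rw [div_le_one (by positivity)]
      simp [Nat.cast_nonneg]
    have hkn_pos : ∀ n, 0 < kn n := by
      intro n
      have := mul_pos hδ (hfrac n)
      simp only [hkn_def]; linarith
    have hbound : ∀ n, ‖x t - y t‖ ≤ a n := by
      intro n
      have hknA : kn n < A := by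
        have h1 : δ * (1 / ((n:ℝ) + 1)) ≤ δ * 1 :=
          mul_le_mul_of_nonneg_left (hfrac1 n) hδ.le
        simp only [hkn_def, hδ_def] at *
        linarith
      have hkn0 : w 0 < kn n := by
        have := mul_pos hδ (hfrac n)
        simp only [hkn_def]; linarith
      have hkey := logLip_barrier A T lam hA hlam w w' hwc hwd hwpos (μn n) (kn n)
        (by simp only [hμn_def]; linarith [hfrac n]) hkn0 hknA (hkn_pos n) t ht
      have hexp_eq : Real.exp (Real.log A + (Real.log (kn n) - Real.log A) * En n)
          = A ^ (1 - En n) * kn n ^ (En n) := by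
        rw [Real.rpow_def_of_pos hA, Real.rpow_def_of_pos (hkn_pos n), ← Real.exp_add]
        ring_nf
      apply hsq _ _ (norm_nonneg _)
        (mul_nonneg (Real.rpow_nonneg hA.le _) (Real.rpow_nonneg (hkn_pos n).le _))
      have hsq_eq : (A ^ ((1 - En n) / 2) * kn n ^ (En n / 2)) ^ (2:ℕ)
          = A ^ (1 - En n) * kn n ^ (En n) := by
        rw [mul_pow, ← Real.rpow_natCast (A ^ ((1 - En n)/2)) 2,
          ← Real.rpow_natCast (kn n ^ (En n/2)) 2,
          ← Real.rpow_mul hA.le, ← Real.rpow_mul (hkn_pos n).le]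
        norm_num
      show ‖x t - y t‖ ^ (2:ℕ) ≤ (A ^ ((1 - En n) / 2) * kn n ^ (En n / 2)) ^ (2:ℕ)
      rw [hsq_eq, ← hexp_eq]
      exact hkey
    have htend : Tendsto a atTop (𝓝 (A ^ ((1 - E) / 2) * (w 0) ^ (E / 2))) := by
      have h1 : Tendsto (fun n : ℕ => 1 / ((n:ℝ) + 1)) atTop (𝓝 0) :=
        tendsto_one_div_add_atTop_nhds_zero_nat
      have hμ : Tendsto μn atTop (𝓝 lam) := by
        have := (tendsto_const_nhds : Tendsto (fun _ : ℕ => lam) atTop (𝓝 lam)).add h1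
        simpa [hμn_def] using this
      have hEtend : Tendsto En atTop (𝓝 E) := by
        rw [hEeq]
        have := (Real.continuous_exp.tendsto _).comp ((hμ.neg).mul_const t)
        simpa [hEn_def, Function.comp_def] using this
      have hktend : Tendsto kn atTop (𝓝 (w 0)) := by
        have := (tendsto_const_nhds : Tendsto (fun _ : ℕ => w 0) atTop (𝓝 (w 0))).add
          (h1.const_mul δ)
        simpa [hkn_def] using this
      have hf1 : Tendsto (fun n => A ^ ((1 - En n) / 2)) atTop (𝓝 (A ^ ((1 - E) / 2))) :=
        Filter.Tendsto.rpow tendsto_const_nhds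
          ((tendsto_const_nhds.sub hEtend).div_const 2) (Or.inl hA.ne')
      have hf2 : Tendsto (fun n => kn n ^ (En n / 2)) atTop (𝓝 ((w 0) ^ (E / 2))) :=
        Filter.Tendsto.rpow hktend (hEtend.div_const 2) (Or.inr (by positivity))
      simpa [ha_def] using hf1.mul hf2
    have hfinal : (w 0) ^ (E / 2) = ‖x 0 - y 0‖ ^ E := by
      simp only [hw_def]
      rw [← Real.rpow_natCast ‖x 0 - y 0‖ 2, ← Real.rpow_mul (norm_nonneg _)]
      norm_num
      rw [show (2:ℝ) * (E / 2) = E by ring]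
    have := ge_of_tendsto' htend hbound
    rw [← hfinal]
    exact this.trans_eq rfl
end
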